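/- arXiv:1110.1003 — 2 statements merged into one kernel-verified Lean document; each statement's English description precedes it below -/
import Mathlib

section
/- Let k be an infinite cardinal. (1) If a metrizable strongly zero-dimensional space X is locally σLW(<k) + 𝒢_δσ (i.e., every point of X has a neighborhood which belongs to σLW(<k) + 𝒢_δσ), then X itself belongs to σLW(<k) + 𝒢_δσ. (2) If X = ∪_{i∈ω} X_i where each subspace X_i belongs to σLW(<k) + 𝒢_δσ, then X belongs to σLW(<k) + 𝒢_δσ. -/
open Topology Set Filter

universe u v

noncomputable section

/-- Strong zero-dimensionality (`Ind X = 0`): any two disjoint closed sets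
can be separated by a clopen set. -/
def StronglyZeroDim (X : Type*) [TopologicalSpace X] : Prop :=
  ∀ A B : Set X, IsClosed A → IsClosed B → Disjoint A B →
    ∃ U : Set X, IsClopen U ∧ A ⊆ U ∧ Disjoint B U

/-- The topological weight of a space: the least cardinality of a base. -/
def topWeight (X : Type u) [TopologicalSpace X] : Cardinal.{u} :=
  ⨅ B : {B : Set (Set X) // TopologicalSpace.IsTopologicalBasis B}, Cardinal.mk B.1

/-- The space has a base of cardinality `< k`. -/
def WeightLT (X : Type u) [TopologicalSpace X] (k : Cardinal.{u}) : Prop :=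
  ∃ B : Set (Set X), TopologicalSpace.IsTopologicalBasis B ∧ Cardinal.mk B < k

/-- Every point has a neighborhood of weight `< k`. -/
def LocallyWeightLT (X : Type u) [TopologicalSpace X] (k : Cardinal.{u}) : Prop :=
  ∀ x : X, ∃ s : Set X, s ∈ nhds x ∧ WeightLT ↥s k

/-- `X ∈ σLW(<k)`: `X` is a countable union of subspaces, each locally of weight `< k`. -/
def SigmaLW (X : Type u) [TopologicalSpace X] (k : Cardinal.{u}) : Prop :=
  ∃ S : ℕ → Set X, (⋃ n, S n) = Set.univ ∧ ∀ n, LocallyWeightLT ↥(S n) k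

/-- A `G_δσ`-subset: a countable union of `G_δ`-sets. -/
def IsGdeltaSigma {Y : Type*} [TopologicalSpace Y] (s : Set Y) : Prop :=
  ∃ G : ℕ → Set Y, (∀ n, IsGδ (G n)) ∧ s = ⋃ n, G n

/-- An `F_σ`-subset: a countable union of closed sets. -/
def IsFsigmaSet {Y : Type*} [TopologicalSpace Y] (s : Set Y) : Prop :=
  ∃ F : ℕ → Set Y, (∀ n, IsClosed (F n)) ∧ s = ⋃ n, F n

/-- An `F_σδ`-subset: a countable intersection of `F_σ`-sets. -/
def IsFsigmaDelta {Y : Type*} [TopologicalSpace Y] (s : Set Y) : Prop :=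
  ∃ F : ℕ → Set Y, (∀ n, IsFsigmaSet (F n)) ∧ s = ⋂ n, F n

/-- An absolute `G_δσ`-set: a metrizable space whose image under every embedding
into a metrizable space is a countable union of `G_δ`-sets. -/
def AbsGdeltaSigma (X : Type u) [TopologicalSpace X] : Prop :=
  TopologicalSpace.MetrizableSpace X ∧
    ∀ (Y : Type u) [TopologicalSpace Y] [TopologicalSpace.MetrizableSpace Y]
      (f : X → Y), Topology.IsEmbedding f → IsGdeltaSigma (Set.range f)

/-- An absolute `F_σδ`-set: a metrizable space whose image under every embedding
into a metrizable space is an `F_σδ`-set. -/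
def AbsFsigmaDelta (X : Type u) [TopologicalSpace X] : Prop :=
  TopologicalSpace.MetrizableSpace X ∧
    ∀ (Y : Type u) [TopologicalSpace Y] [TopologicalSpace.MetrizableSpace Y]
      (f : X → Y), Topology.IsEmbedding f → IsFsigmaDelta (Set.range f)

/-- `X ∈ σLW(<k) + 𝒢_δσ` : `X = A ∪ B` with `A ∈ σLW(<k)` and `B` an absolute
`G_δσ`-set. -/
def SLWplusGDS (X : Type u) [TopologicalSpace X] (k : Cardinal.{u}) : Prop :=
  ∃ A B : Set X, A ∪ B = Set.univ ∧ SigmaLW ↥A k ∧ AbsGdeltaSigma ↥B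

/-- No nonempty open subspace is `σLW(<k) + 𝒢_δσ`. -/
def NowhereSLWplusGDS (X : Type u) [TopologicalSpace X] (k : Cardinal.{u}) : Prop :=
  ∀ U : Set X, IsOpen U → U.Nonempty → ¬ SLWplusGDS ↥U k

/-- A space is of first category if it is meager in itself. -/
def FirstCategory (X : Type*) [TopologicalSpace X] : Prop :=
  IsMeagre (Set.univ : Set X)

/-- A Souslin (analytic) subset of a space:
`s = ⋃_{t ∈ ω^ω} ⋂_n F(t↾n)` for a family of closed sets indexed by finite tuples. -/
def IsSuslinIn {Y : Type*} [TopologicalSpace Y] (s : Set Y) : Prop :=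
  ∃ F : List ℕ → Set Y, (∀ l, IsClosed (F l)) ∧
    s = ⋃ t : ℕ → ℕ, ⋂ n : ℕ, F (List.ofFn fun i : Fin n => t i)

/-- An absolute Souslin space: metrizable, and Souslin in every completely metrizable
space into which it embeds. -/
def AbsSuslin (X : Type u) [TopologicalSpace X] : Prop :=
  TopologicalSpace.MetrizableSpace X ∧
    ∀ (Y : Type u) [MetricSpace Y] [CompleteSpace Y] (f : X → Y),
      Topology.IsEmbedding f → IsSuslinIn (Set.range f)

/-- An h-homogeneous space: every nonempty clopen subset is homeomorphic to the
whole space. -/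
def HHomogeneous (X : Type*) [TopologicalSpace X] : Prop :=
  ∀ U : Set X, IsClopen U → U.Nonempty → Nonempty (↥U ≃ₜ X)

/-- A discrete family of sets: every point has a neighborhood meeting at most one
member of the family. -/
def DiscreteFamily {X : Type*} [TopologicalSpace X] {ι : Type*} (f : ι → Set X) : Prop :=
  ∀ x : X, ∃ U ∈ nhds x, {i | (f i ∩ U).Nonempty}.Subsingleton

/-- A discrete space of cardinality `k`. -/
def DiscT (k : Cardinal.{u}) : Type u := k.out

instance (k : Cardinal.{u}) : TopologicalSpace (DiscT k) := ⊥
instance (k : Cardinal.{u}) : DiscreteTopology (DiscT k) := ⟨rfl⟩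

/-- The Baire space `B(k) = k^ω`. -/
def BaireB (k : Cardinal.{u}) : Type u := ℕ → DiscT k

instance (k : Cardinal.{u}) : TopologicalSpace (BaireB k) :=
  inferInstanceAs (TopologicalSpace (ℕ → DiscT k))

open Classical in
/-- The discrete factor of `B*(k)`: two points if `k = ℵ₀`, and `k` points otherwise. -/
def StarT (k : Cardinal.{u}) : Type u :=
  if k = Cardinal.aleph0 then ULift Bool else DiscT k

instance (k : Cardinal.{u}) : TopologicalSpace (StarT k) := ⊥
instance (k : Cardinal.{u}) : DiscreteTopology (StarT k) := ⟨rfl⟩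

/-- `B*(k)`: the Cantor set `2^ω` if `k = ℵ₀`, and the Baire space `B(k)` if `k > ℵ₀`. -/
def BaireStar (k : Cardinal.{u}) : Type u := ℕ → StarT k

instance (k : Cardinal.{u}) : TopologicalSpace (BaireStar k) :=
  inferInstanceAs (TopologicalSpace (ℕ → StarT k))

/-- A discrete space of cardinality `k` (for infinite `k`), with a distinguished basepoint. -/
def QBase (k : Cardinal.{u}) : Type u := DiscT k ⊕ PUnit.{u + 1}

instance (k : Cardinal.{u}) : TopologicalSpace (QBase k) := ⊥
instance (k : Cardinal.{u}) : DiscreteTopology (QBase k) := ⟨rfl⟩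

/-- `Q(k)`: the σ-product of `ω` copies of a discrete space of cardinality `k`, i.e.
the subspace of the product consisting of the sequences eventually equal to the basepoint. -/
def Qk (k : Cardinal.{u}) : Type u :=
  {x : ℕ → QBase k // ∀ᶠ n in Filter.atTop, x n = Sum.inr PUnit.unit}

instance (k : Cardinal.{u}) : TopologicalSpace (Qk k) :=
  inferInstanceAs (TopologicalSpace
    {x : ℕ → QBase k // ∀ᶠ n in Filter.atTop, x n = Sum.inr PUnit.unit})

/-- The countable power `Q(k)^ω`. -/
def QkOmega (k : Cardinal.{u}) : Type u := ℕ → Qk k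

instance (k : Cardinal.{u}) : TopologicalSpace (QkOmega k) :=
  inferInstanceAs (TopologicalSpace (ℕ → Qk k))

/-- `Z` is homeomorphic to `Q(k)^ω`. -/
def IsQkOmega (k : Cardinal.{u}) (Z : Type*) [TopologicalSpace Z] : Prop :=
  Nonempty (Z ≃ₜ QkOmega k)

/-- `Z` is homeomorphic to `A^{II}_k`, the complement in `B*(k)` of a dense copy of
`Q(k)^ω`. -/
def IsAII (k : Cardinal.{u}) (Z : Type*) [TopologicalSpace Z] : Prop :=
  ∃ A : Set (BaireStar k), Dense A ∧ IsQkOmega k ↥A ∧ Nonempty (Z ≃ₜ ↥(Aᶜ))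

/-- `Z` is homeomorphic to `A^I_k = Q × A^{II}_k`. -/
def IsAI (k : Cardinal.{u}) (Z : Type*) [TopologicalSpace Z] : Prop :=
  ∃ A : Set (BaireStar k), Dense A ∧ IsQkOmega k ↥A ∧ Nonempty (Z ≃ₜ (ℚ × ↥(Aᶜ)))

/-- `Z` is homeomorphic to `M^{II}_k`, the complement in `B*(k)` of a dense copy of
`A^I_k`. -/
def IsMII (k : Cardinal.{u}) (Z : Type*) [TopologicalSpace Z] : Prop :=
  ∃ Y : Set (BaireStar k), Dense Y ∧ IsAI k ↥Y ∧ Nonempty (Z ≃ₜ ↥(Yᶜ))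

/-- `X ∈ 𝓕_σδ ∖ σLW(<k)`: `X` is homeomorphic to `F ∖ L` for some absolute
`F_σδ`-space `F` and some `L ⊆ F` with `L ∈ σLW(<k)`. -/
def FsdMinusSLW (X : Type u) [TopologicalSpace X] (k : Cardinal.{u}) : Prop :=
  ∃ (F : TopCat.{u}) (L : Set F), AbsFsigmaDelta ↥F ∧ SigmaLW ↥L k ∧
    Nonempty (X ≃ₜ ↥(Lᶜ))

/-- No nonempty open subspace is in the class `𝓕_σδ ∖ σLW(<k)`. -/
def NowhereFsdMinusSLW (X : Type u) [TopologicalSpace X] (k : Cardinal.{u}) : Prop :=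
  ∀ U : Set X, IsOpen U → U.Nonempty → ¬ FsdMinusSLW ↥U k

/-- A topologically complete (i.e. completely metrizable) space. -/
def CompletelyMetrizable (X : Type*) [t : TopologicalSpace X] : Prop :=
  ∃ m : MetricSpace X, m.toUniformSpace.toTopologicalSpace = t ∧
    @CompleteSpace X m.toUniformSpace

end
section Aux
open Topology TopologicalSpace
open scoped Function
open scoped ENNReal

universe w

variable {Z W : Type u} [TopologicalSpace Z] [TopologicalSpace W] {k : Cardinal.{u}}

/-- restriction of an embedding to a preimage of a set -/
theorem aux_restrict_isEmbedding {e : Z → W} (he : IsEmbedding e) (s : Set W) :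
    IsEmbedding (fun z : ↥(e ⁻¹' s) => (⟨e z.1, z.2⟩ : ↥s)) := by
  have hcont : Continuous (fun z : ↥(e ⁻¹' s) => (⟨e z.1, z.2⟩ : ↥s)) :=
    Continuous.subtype_mk (he.continuous.comp continuous_subtype_val) _
  have hcomp : IsEmbedding ((Subtype.val : ↥s → W) ∘
      (fun z : ↥(e ⁻¹' s) => (⟨e z.1, z.2⟩ : ↥s))) := by
    have : ((Subtype.val : ↥s → W) ∘ (fun z : ↥(e ⁻¹' s) => (⟨e z.1, z.2⟩ : ↥s)))
        = e ∘ (Subtype.val : ↥(e ⁻¹' s) → Z) := rfl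
    rw [this]
    exact he.comp IsEmbedding.subtypeVal
  exact IsEmbedding.of_comp hcont continuous_subtype_val hcomp

/-- image of a set under an embedding, as a homeomorphism -/
noncomputable def auxImageHomeo {e : Z → W} (he : IsEmbedding e) (s : Set Z) :
    ↥s ≃ₜ ↥(e '' s) := by
  refine (Equiv.Set.image e s he.injective).toHomeomorphOfIsInducing ?_
  have hc : Continuous (Equiv.Set.image e s he.injective) := by
    have : Continuous (fun z : ↥s => (⟨e z.1, Set.mem_image_of_mem e z.2⟩ : ↥(e '' s))) :=
      Continuous.subtype_mk (he.continuous.comp continuous_subtype_val) _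
    convert this using 1
    funext z; rfl
  refine Topology.IsInducing.of_comp hc continuous_subtype_val ?_
  have : ((Subtype.val : ↥(e '' s) → W) ∘ (Equiv.Set.image e s he.injective))
      = e ∘ (Subtype.val : ↥s → Z) := rfl
  rw [this]
  exact (he.comp IsEmbedding.subtypeVal).isInducing

theorem weightLT_of_isInducing {e : Z → W} (he : Topology.IsInducing e) (h : WeightLT W k) :
    WeightLT Z k := by
  obtain ⟨B, hB, hcard⟩ := h
  exact ⟨(Set.preimage e) '' B, hB.isInducing he, lt_of_le_of_lt (Cardinal.mk_image_le) hcard⟩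

theorem weightLT_homeo (h : Z ≃ₜ W) (hw : WeightLT Z k) : WeightLT W k :=
  weightLT_of_isInducing h.symm.isInducing hw

theorem locallyWeightLT_of_isEmbedding {e : Z → W} (he : IsEmbedding e)
    (h : LocallyWeightLT W k) : LocallyWeightLT Z k := by
  intro z
  obtain ⟨s, hs, hws⟩ := h (e z)
  refine ⟨e ⁻¹' s, he.continuous.continuousAt.preimage_mem_nhds hs, ?_⟩
  exact weightLT_of_isInducing (aux_restrict_isEmbedding he s).isInducing hws

theorem sigmaLW_of_isEmbedding {e : Z → W} (he : IsEmbedding e)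
    (h : SigmaLW W k) : SigmaLW Z k := by
  obtain ⟨S, hS, hL⟩ := h
  refine ⟨fun n => e ⁻¹' (S n), ?_, fun n => ?_⟩
  · rw [← Set.preimage_iUnion, hS, Set.preimage_univ]
  · exact locallyWeightLT_of_isEmbedding (aux_restrict_isEmbedding he (S n)) (hL n)

theorem sigmaLW_homeo (h : Z ≃ₜ W) (hw : SigmaLW Z k) : SigmaLW W k :=
  sigmaLW_of_isEmbedding h.symm.isEmbedding hw

theorem absGDS_homeo (h : Z ≃ₜ W) (ha : AbsGdeltaSigma Z) : AbsGdeltaSigma W := by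
  refine ⟨?_, fun Y _ _ f hf => ?_⟩
  · have := ha.1
    exact h.symm.isEmbedding.metrizableSpace
  · have h2 := ha.2 Y (f ∘ h) (hf.comp h.isEmbedding)
    rwa [Set.range_comp, Set.range_eq_univ.2 h.surjective, Set.image_univ] at h2

/-- `↥s` for `s : Set ↥A` is homeomorphic to the corresponding subset of the ambient space. -/
noncomputable def auxSubHomeo {A : Set Z} (s : Set ↥A) :
    ↥s ≃ₜ ↥(Subtype.val '' s : Set Z) :=
  auxImageHomeo IsEmbedding.subtypeVal s

/-- `val ⁻¹' u ⊆ ↥A` is homeomorphic to `↥u` when `u ⊆ A`. -/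
noncomputable def auxPreHomeo {A u : Set Z} (hu : u ⊆ A) :
    ↥(Subtype.val ⁻¹' u : Set ↥A) ≃ₜ ↥u :=
  (auxSubHomeo _).trans (Homeomorph.setCongr (by
    rw [Subtype.image_preimage_coe, Set.inter_eq_right.2 hu]))

theorem auxSub_isEmbedding {A : Set Z} (s : Set ↥A) :
    IsEmbedding (fun x : ↥s => (x.1.1 : Z)) :=
  (IsEmbedding.subtypeVal (p := (· ∈ A))).comp IsEmbedding.subtypeVal

/-- countable unions of `Gδσ` sets are `Gδσ`. -/
theorem auxGdsigma_iUnion {Y : Type w} [TopologicalSpace Y] {T : ℕ → Set Y}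
    (h : ∀ n, IsGdeltaSigma (T n)) : IsGdeltaSigma (⋃ n, T n) := by
  choose G hG hTG using h
  let e : ℕ → ℕ × ℕ := fun n => (Denumerable.ofNat (ℕ × ℕ) n)
  refine ⟨fun n => G (e n).1 (e n).2, fun n => hG _ _, ?_⟩
  ext x
  simp only [Set.mem_iUnion]
  constructor
  · rintro ⟨n, hn⟩
    rw [hTG n] at hn
    obtain ⟨m, hm⟩ := Set.mem_iUnion.1 hn
    exact ⟨Encodable.encode ((n, m) : ℕ × ℕ), by
      simpa [e, Denumerable.ofNat_encode] using hm⟩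
  · rintro ⟨n, hn⟩
    exact ⟨(e n).1, by rw [hTG]; exact Set.mem_iUnion.2 ⟨(e n).2, hn⟩⟩

/-- union of Gδ sets inside pairwise disjoint open sets is Gδ. -/
theorem auxGdelta_disjoint_iUnion {Y : Type w} [TopologicalSpace Y] {ι : Type*}
    {W H : ι → Set Y} (hWo : ∀ i, IsOpen (W i)) (hWd : Pairwise (Disjoint on W))
    (hH : ∀ i, IsGδ (H i)) (hHW : ∀ i, H i ⊆ W i) : IsGδ (⋃ i, H i) := by
  have h' : ∀ i, ∃ U : ℕ → Set Y, (∀ n, IsOpen (U n)) ∧ H i = ⋂ n, U n := by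
    intro i; exact isGδ_iff_eq_iInter_nat.1 (hH i)
  choose U hUo hHU using h'
  rw [isGδ_iff_eq_iInter_nat]
  refine ⟨fun n => ⋃ i, (U i n ∩ W i), fun n => isOpen_iUnion fun i => (hUo i n).inter (hWo i),
    ?_⟩
  ext x
  simp only [Set.mem_iUnion, Set.mem_iInter]
  constructor
  · rintro ⟨i, hi⟩ n
    exact ⟨i, ⟨(hHU i ▸ hi : x ∈ ⋂ n, U i n) |> Set.mem_iInter.1 |> (· n), hHW i hi⟩⟩
  · intro h
    obtain ⟨i0, -, hW0⟩ := h 0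
    refine ⟨i0, ?_⟩
    rw [hHU i0]
    refine Set.mem_iInter.2 fun n => ?_
    obtain ⟨j, hUj, hWj⟩ := h n
    rcases eq_or_ne j i0 with rfl | hne
    · exact hUj
    · exact absurd (Set.mem_inter hWj hW0) (by
        have := hWd hne
        simp only [Function.onFun] at this
        exact fun hx => (this.le_bot hx : x ∈ (∅ : Set Y)))

theorem sigmaLW_subtype_iff {T : Set Z} :
    SigmaLW ↥T k ↔ ∃ S : ℕ → Set Z, (⋃ n, S n) = T ∧ ∀ n, LocallyWeightLT ↥(S n) k := by
  constructor
  · rintro ⟨S, hS, hL⟩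
    refine ⟨fun n => Subtype.val '' S n, ?_, fun n => ?_⟩
    · rw [← Set.image_iUnion, hS, Set.image_univ, Subtype.range_coe]
    · exact locallyWeightLT_of_isEmbedding (auxSubHomeo (S n)).symm.isEmbedding (hL n)
  · rintro ⟨S, hS, hL⟩
    refine ⟨fun n => Subtype.val ⁻¹' S n, ?_, fun n => ?_⟩
    · rw [← Set.preimage_iUnion, hS, Subtype.coe_preimage_self]
    · have hsub : S n ⊆ T := hS ▸ Set.subset_iUnion S n
      exact locallyWeightLT_of_isEmbedding (auxPreHomeo hsub).isEmbedding (hL n)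

theorem locallyWeightLT_subtype_iff {T : Set Z} :
    LocallyWeightLT ↥T k ↔
      ∀ x ∈ T, ∃ u : Set Z, u ⊆ T ∧ u ∈ nhdsWithin x T ∧ WeightLT ↥u k := by
  constructor
  · intro h x hx
    obtain ⟨s, hs, hw⟩ := h ⟨x, hx⟩
    refine ⟨Subtype.val '' s, by rintro y ⟨z, -, rfl⟩; exact z.2, ?_, ?_⟩
    · show Subtype.val '' s ∈ 𝓝[T] ((⟨x, hx⟩ : T) : Z)
      rw [← map_nhds_subtype_val]
      exact Filter.image_mem_map hs
    · exact weightLT_homeo (auxSubHomeo s) hw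
  · intro h x
    obtain ⟨u, hsub, hmem, hw⟩ := h x.1 x.2
    refine ⟨Subtype.val ⁻¹' u, ?_, weightLT_homeo (auxPreHomeo hsub).symm hw⟩
    rw [nhds_subtype_eq_comap_nhdsWithin]
    exact Filter.preimage_mem_comap hmem

theorem sigmaLW_disjoint_iUnion {ι : Type*} {T V : ι → Set Z} (hV : ∀ i, IsOpen (V i))
    (hTV : ∀ i, T i = (⋃ j, T j) ∩ V i) (hd : Pairwise (Disjoint on T))
    (hs : ∀ i, SigmaLW ↥(T i) k) : SigmaLW ↥(⋃ i, T i) k := by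
  have h' : ∀ i, ∃ S : ℕ → Set Z, (⋃ m, S m) = T i ∧ ∀ m, LocallyWeightLT ↥(S m) k :=
    fun i => sigmaLW_subtype_iff.1 (hs i)
  choose S hS hL using h'
  refine sigmaLW_subtype_iff.2 ⟨fun m => ⋃ i, S i m, ?_, fun m => ?_⟩
  · rw [Set.iUnion_comm]
    exact Set.iUnion_congr hS
  · rw [locallyWeightLT_subtype_iff]
    intro x hx
    obtain ⟨i, hxi⟩ := Set.mem_iUnion.1 hx
    obtain ⟨u, hu1, hu2, hu3⟩ := (locallyWeightLT_subtype_iff.1 (hL i m)) x hxi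
    have hST : ∀ j, S j m ⊆ T j := fun j => (hS j) ▸ Set.subset_iUnion _ m
    refine ⟨u, hu1.trans ((Set.subset_iUnion (fun j => S j m) i)), ?_, hu3⟩
    obtain ⟨w, hwo, hxw, hws⟩ := mem_nhdsWithin.1 hu2
    refine mem_nhdsWithin.2 ⟨w ∩ V i, hwo.inter (hV i), ⟨hxw, ?_⟩, ?_⟩
    · exact ((hTV i) ▸ hST i hxi).2
    · rintro y ⟨⟨hyw, hyV⟩, hyL⟩
      obtain ⟨j, hyj⟩ := Set.mem_iUnion.1 hyL
      rcases eq_or_ne j i with rfl | hne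
      · exact hws ⟨hyw, hyj⟩
      · exfalso
        have hyTj : y ∈ T j := hST j hyj
        have hyTi : y ∈ T i := (hTV i) ▸ ⟨Set.mem_iUnion.2 ⟨j, hyTj⟩, hyV⟩
        exact (hd hne).le_bot ⟨hyTj, hyTi⟩

theorem sigmaLW_iUnion_nat {T : ℕ → Set Z} (hs : ∀ n, SigmaLW ↥(T n) k) :
    SigmaLW ↥(⋃ n, T n) k := by
  have h' : ∀ n, ∃ S : ℕ → Set Z, (⋃ m, S m) = T n ∧ ∀ m, LocallyWeightLT ↥(S m) k :=
    fun n => sigmaLW_subtype_iff.1 (hs n)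
  choose S hS hL using h'
  let e : ℕ → ℕ × ℕ := fun n => (Denumerable.ofNat (ℕ × ℕ) n)
  refine sigmaLW_subtype_iff.2 ⟨fun n => S (e n).1 (e n).2, ?_, fun n => hL _ _⟩
  ext x
  simp only [Set.mem_iUnion]
  constructor
  · rintro ⟨n, hn⟩
    refine ⟨(e n).1, ?_⟩
    rw [← hS (e n).1]
    exact Set.mem_iUnion.2 ⟨(e n).2, hn⟩
  · rintro ⟨n, hn⟩
    rw [← hS n] at hn
    obtain ⟨m, hm⟩ := Set.mem_iUnion.1 hn
    exact ⟨Encodable.encode ((n, m) : ℕ × ℕ), by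
      simpa [e, Denumerable.ofNat_encode] using hm⟩

theorem absGDS_iUnion_nat {Z : Type u} [TopologicalSpace Z]
    [TopologicalSpace.MetrizableSpace Z] {T : ℕ → Set Z}
    (h : ∀ n, AbsGdeltaSigma ↥(T n)) : AbsGdeltaSigma ↥(⋃ n, T n) := by
  refine ⟨inferInstance, fun Y _ _ f hf => ?_⟩
  have hrange : Set.range f = ⋃ n, Set.range (f ∘ Set.inclusion (Set.subset_iUnion T n)) := by
    ext y
    simp only [Set.mem_iUnion, Set.mem_range, Function.comp_apply]
    constructor
    · rintro ⟨z, rfl⟩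
      obtain ⟨n, hn⟩ := Set.mem_iUnion.1 z.2
      exact ⟨n, ⟨z.1, hn⟩, by congr⟩
    · rintro ⟨n, z, rfl⟩
      exact ⟨_, rfl⟩
  rw [hrange]
  exact auxGdsigma_iUnion fun n =>
    (h n).2 Y _ (hf.comp (Topology.IsEmbedding.inclusion (Set.subset_iUnion T n)))

theorem slwgds_subtype_iff {s : Set Z} :
    SLWplusGDS ↥s k ↔
      ∃ A B : Set Z, A ∪ B = s ∧ SigmaLW ↥A k ∧ AbsGdeltaSigma ↥B := by
  constructor
  · rintro ⟨A, B, hU, hA, hB⟩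
    refine ⟨Subtype.val '' A, Subtype.val '' B, ?_, sigmaLW_homeo (auxSubHomeo A) hA,
      absGDS_homeo (auxSubHomeo B) hB⟩
    rw [← Set.image_union, hU, Set.image_univ, Subtype.range_coe]
  · rintro ⟨A, B, hU, hA, hB⟩
    have hAs : A ⊆ s := hU ▸ Set.subset_union_left
    have hBs : B ⊆ s := hU ▸ Set.subset_union_right
    refine ⟨Subtype.val ⁻¹' A, Subtype.val ⁻¹' B, ?_,
      sigmaLW_homeo (auxPreHomeo hAs).symm hA, absGDS_homeo (auxPreHomeo hBs).symm hB⟩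
    rw [← Set.preimage_union, hU, Subtype.coe_preimage_self]

theorem cm_of_isClosedEmbedding {Z W : Type u} [tZ : TopologicalSpace Z]
    [tW : TopologicalSpace W] {e : Z → W} (he : Topology.IsClosedEmbedding e)
    (h : CompletelyMetrizable W) : CompletelyMetrizable Z := by
  obtain ⟨m, hm, hc⟩ := h
  subst hm
  letI : MetricSpace W := m
  haveI : CompleteSpace W := hc
  refine ⟨MetricSpace.induced e he.injective m, he.isInducing.eq_induced.symm, ?_⟩
  letI mZ : MetricSpace Z := MetricSpace.induced e he.injective m
  have hiso : @Isometry Z W mZ.toPseudoEMetricSpace _ e := fun x y => rfl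
  exact hiso.isUniformInducing.completeSpace he.isClosed_range.isComplete

theorem cm_homeo {Z W : Type u} [TopologicalSpace Z] [TopologicalSpace W] (h : Z ≃ₜ W)
    (hw : CompletelyMetrizable W) : CompletelyMetrizable Z :=
  cm_of_isClosedEmbedding h.isClosedEmbedding hw

theorem cm_isGδ {W : Type u} [tW : TopologicalSpace W] (h : CompletelyMetrizable W)
    {s : Set W} (hs : IsGδ s) : CompletelyMetrizable ↥s := by
  obtain ⟨m, hm, hc⟩ := h
  subst hm
  letI : MetricSpace W := m
  haveI : CompleteSpace W := hc
  obtain ⟨U, hUo, rfl⟩ := hs.eq_iInter_nat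
  let T := ∀ n : ℕ, TopologicalSpace.Opens.CompleteCopy (⟨U n, hUo n⟩ : TopologicalSpace.Opens W)
  letI mT : MetricSpace T := UniformSpace.metricSpace T
  let g : ↥(⋂ n, U n) → T := fun x n => ⟨x.1, Set.mem_iInter.1 x.2 n⟩
  have hq : Continuous fun f : T => ((f 0).1 : W) := (continuous_apply 0).subtype_val
  have hgc : Continuous g := by
    refine continuous_pi fun n => ?_
    exact Continuous.subtype_mk continuous_subtype_val _
  have hge : Topology.IsEmbedding g := by
    have hcomp : Topology.IsEmbedding ((fun f : T => ((f 0).1 : W)) ∘ g) :=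
      IsEmbedding.subtypeVal
    refine Topology.IsEmbedding.of_comp hgc hq hcomp
  have hrange : Set.range g = ⋂ n, {f : T | ((f n).1 : W) = ((f 0).1 : W)} := by
    ext f
    simp only [Set.mem_range, Set.mem_iInter, Set.mem_setOf_eq]
    constructor
    · rintro ⟨x, rfl⟩ n
      rfl
    · intro hf
      have hx : ((f 0).1 : W) ∈ ⋂ n, U n :=
        Set.mem_iInter.2 fun n => hf n ▸ (f n).2
      exact ⟨⟨(f 0).1, hx⟩, funext fun n => Subtype.ext (hf n).symm⟩
  have hcl : IsClosed (Set.range g) := by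
    rw [hrange]
    exact isClosed_iInter fun n =>
      isClosed_eq ((continuous_apply n).subtype_val) ((continuous_apply 0).subtype_val)
  refine cm_of_isClosedEmbedding ⟨hge, hcl⟩ ⟨mT, rfl, ?_⟩
  show CompleteSpace T
  infer_instance

theorem cm_open {W : Type u} [TopologicalSpace W] (h : CompletelyMetrizable W)
    {u : Set W} (hu : IsOpen u) : CompletelyMetrizable ↥u :=
  cm_isGδ h hu.isGδ

theorem aux_inv_succ_le {n N : ℕ} (h : N ≤ n) :
    ((n + 1 : ℕ) : ℝ≥0∞)⁻¹ ≤ ((N + 1 : ℕ) : ℝ≥0∞)⁻¹ :=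
  ENNReal.inv_le_inv.2 (by exact_mod_cast Nat.succ_le_succ h)

theorem aux_exists_inv_succ_lt {ε : ℝ≥0∞} (hε : 0 < ε) :
    ∃ N : ℕ, ((N + 1 : ℕ) : ℝ≥0∞)⁻¹ < ε := by
  obtain ⟨n, hn⟩ := ENNReal.exists_inv_nat_lt hε.ne'
  exact ⟨n, lt_of_le_of_lt (ENNReal.inv_le_inv.2 (by exact_mod_cast Nat.le_succ n)) hn⟩

/-- A complete metric space embedded in a metric space has `Gδ` range. -/
theorem isGδ_range_of_complete {Y : Type u} {Z : Type v} [MetricSpace Y] [MetricSpace Z]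
    [CompleteSpace Z] {g : Z → Y} (hg : Topology.IsEmbedding g) : IsGδ (Set.range g) := by
  classical
  let D : ℕ → Set Y := fun n =>
    ⋃₀ {V : Set Y | IsOpen V ∧ EMetric.diam (g ⁻¹' V) ≤ ((n + 1 : ℕ) : ℝ≥0∞)⁻¹}
  have hDo : ∀ n, IsOpen (D n) := fun n => isOpen_sUnion fun V hV => hV.1
  have hkey : Set.range g = closure (Set.range g) ∩ ⋂ n, D n := by
    apply Set.Subset.antisymm
    · intro y hy
      obtain ⟨z, rfl⟩ := hy
      refine ⟨subset_closure ⟨z, rfl⟩, Set.mem_iInter.2 fun n => ?_⟩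
      set c : ℝ≥0∞ := ((n + 1 : ℕ) : ℝ≥0∞)
      have hc0 : c ≠ 0 := by positivity
      have hct : c ≠ ⊤ := ENNReal.natCast_ne_top _
      have hball : IsOpen (EMetric.ball z (2 * c)⁻¹) := EMetric.isOpen_ball
      rw [hg.isInducing.isOpen_iff] at hball
      obtain ⟨V, hVo, hVb⟩ := hball
      have hdiam : EMetric.diam (g ⁻¹' V) ≤ c⁻¹ := by
        rw [hVb]
        refine le_trans EMetric.diam_ball ?_
        rw [ENNReal.mul_inv (Or.inl two_ne_zero) (Or.inl ENNReal.ofNat_ne_top), ← mul_assoc,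
          ENNReal.mul_inv_cancel two_ne_zero ENNReal.ofNat_ne_top, one_mul]
      have hzV : g z ∈ V := by
        have : z ∈ EMetric.ball z (2 * c)⁻¹ := EMetric.mem_ball_self (by
          simp only [ENNReal.inv_pos]
          exact ENNReal.mul_ne_top ENNReal.ofNat_ne_top hct)
        rw [← hVb] at this
        exact this
      exact Set.mem_sUnion.2 ⟨V, ⟨hVo, hdiam⟩, hzV⟩
    · rintro x ⟨hxc, hxD⟩
      have hV : ∀ n, ∃ V : Set Y, IsOpen V ∧
          EMetric.diam (g ⁻¹' V) ≤ ((n + 1 : ℕ) : ℝ≥0∞)⁻¹ ∧ x ∈ V := by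
        intro n
        obtain ⟨V, hVmem, hxV⟩ := Set.mem_sUnion.1 (Set.mem_iInter.1 hxD n)
        exact ⟨V, hVmem.1, hVmem.2, hxV⟩
      choose V hVo hVd hxV using hV
      have hz : ∀ n : ℕ, ∃ z : Z, (∀ i ≤ n, g z ∈ V i) ∧
          edist (g z) x < ((n + 1 : ℕ) : ℝ≥0∞)⁻¹ := by
        intro n
        have hO : IsOpen ((⋂ i ∈ Set.Iic n, V i) ∩ EMetric.ball x ((n + 1 : ℕ) : ℝ≥0∞)⁻¹) :=
          ((Set.finite_Iic n).isOpen_biInter fun i _ => hVo i).inter EMetric.isOpen_ball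
        have hxO : x ∈ (⋂ i ∈ Set.Iic n, V i) ∩ EMetric.ball x ((n + 1 : ℕ) : ℝ≥0∞)⁻¹ := by
          refine ⟨Set.mem_biInter fun i _ => hxV i, EMetric.mem_ball_self ?_⟩
          simp only [ENNReal.inv_pos]
          exact ENNReal.natCast_ne_top _
        obtain ⟨y, hyO, hyr⟩ := _root_.mem_closure_iff.1 hxc _ hO hxO
        obtain ⟨z, rfl⟩ := hyr
        refine ⟨z, fun i hi => ?_, ?_⟩
        · exact Set.mem_iInter₂.1 hyO.1 i hi
        · exact EMetric.mem_ball.1 hyO.2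
      choose z hz1 hz2 using hz
      have hcauchy : CauchySeq z := by
        rw [EMetric.cauchySeq_iff]
        intro ε hε
        obtain ⟨N, hN⟩ := aux_exists_inv_succ_lt hε
        refine ⟨N, fun m hm m' hm' => lt_of_le_of_lt ?_ hN⟩
        refine le_trans (EMetric.edist_le_diam_of_mem (s := g ⁻¹' V N) ?_ ?_) (hVd N) <;>
          [exact hz1 m N hm; exact hz1 m' N hm']
      obtain ⟨w, hw⟩ := cauchySeq_tendsto_of_complete hcauchy
      have h1 : Filter.Tendsto (fun n => g (z n)) Filter.atTop (nhds (g w)) :=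
        ((hg.continuous.tendsto w).comp hw)
      have h2 : Filter.Tendsto (fun n => g (z n)) Filter.atTop (nhds x) := by
        rw [EMetric.tendsto_atTop]
        intro ε hε
        obtain ⟨N, hN⟩ := aux_exists_inv_succ_lt hε
        exact ⟨N, fun n hn => lt_of_lt_of_le (hz2 n) (le_trans (aux_inv_succ_le hn) hN.le)⟩
      exact (tendsto_nhds_unique h1 h2) ▸ ⟨w, rfl⟩
  rw [hkey]
  exact IsGδ.inter isClosed_closure.isGδ (IsGδ.iInter fun n => (hDo n).isGδ)

/-- A completely metrizable subspace of a metric space is `Gδ`. -/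
theorem isGδ_of_cm {Y : Type u} [MetricSpace Y] {s : Set Y}
    (h : CompletelyMetrizable ↥s) : IsGδ s := by
  obtain ⟨m, hm, hc⟩ := h
  have hemb : @Topology.IsEmbedding ↥s Y m.toUniformSpace.toTopologicalSpace _ Subtype.val := by
    rw [hm]
    exact IsEmbedding.subtypeVal
  have := @isGδ_range_of_complete Y ↥s _ m hc _ hemb
  rwa [Subtype.range_val] at this

/-- countable cover by completely metrizable subspaces -/
def CMsigma (Z : Type u) [TopologicalSpace Z] : Prop :=
  ∃ C : ℕ → Set Z, (⋃ n, C n) = Set.univ ∧ ∀ n, CompletelyMetrizable ↥(C n)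

noncomputable def auxRangeHomeo {Z W : Type u} [TopologicalSpace Z] [TopologicalSpace W]
    {e : Z → W} (he : IsEmbedding e) : Z ≃ₜ ↥(Set.range e) :=
  (Homeomorph.Set.univ Z).symm.trans ((auxImageHomeo he Set.univ).trans
    (Homeomorph.setCongr (by rw [Set.image_univ])))

theorem cmSigma_of_absGDS {Z : Type u} [tZ : TopologicalSpace Z] (h : AbsGdeltaSigma Z) :
    CMsigma Z := by
  obtain ⟨hmet, habs⟩ := h
  haveI := hmet
  obtain ⟨m, hm⟩ : ∃ m : MetricSpace Z, m.toUniformSpace.toTopologicalSpace = tZ :=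
    ⟨TopologicalSpace.metrizableSpaceMetric Z, rfl⟩
  subst hm
  letI : MetricSpace Z := m
  have hemb : IsEmbedding ((↑) : Z → UniformSpace.Completion Z) :=
    UniformSpace.Completion.coe_isometry.isEmbedding
  obtain ⟨G, hGδ, hrange⟩ := habs (UniformSpace.Completion Z) _ hemb
  refine ⟨fun n => (↑· : Z → UniformSpace.Completion Z) ⁻¹' G n, ?_, fun n => ?_⟩
  · ext x
    simp only [Set.mem_iUnion, Set.mem_univ, iff_true, Set.mem_preimage]
    have : (x : UniformSpace.Completion Z) ∈ ⋃ n, G n := by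
      rw [← hrange]; exact ⟨x, rfl⟩
    exact Set.mem_iUnion.1 this
  · have hsub : G n ⊆ Set.range ((↑·) : Z → UniformSpace.Completion Z) := by
      rw [hrange]; exact Set.subset_iUnion G n
    have himg : (↑· : Z → UniformSpace.Completion Z) ''
        ((↑· : Z → UniformSpace.Completion Z) ⁻¹' G n) = G n := by
      rw [Set.image_preimage_eq_inter_range, Set.inter_eq_left.2 hsub]
    have hGn : CompletelyMetrizable ↥(G n) :=
      cm_isGδ ⟨inferInstance, rfl, inferInstance⟩ (hGδ n)
    exact cm_homeo ((auxImageHomeo hemb _).trans (Homeomorph.setCongr himg)) hGn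

theorem absGDS_of_cmSigma {Z : Type u} [tZ : TopologicalSpace Z]
    [TopologicalSpace.MetrizableSpace Z] (h : CMsigma Z) : AbsGdeltaSigma Z := by
  refine ⟨inferInstance, fun Y tY hYm f hf => ?_⟩
  obtain ⟨mY, hmY⟩ : ∃ m : MetricSpace Y, m.toUniformSpace.toTopologicalSpace = tY :=
    ⟨TopologicalSpace.metrizableSpaceMetric Y, rfl⟩
  subst hmY
  letI : MetricSpace Y := mY
  obtain ⟨C, hC, hcm⟩ := h
  refine ⟨fun n => f '' C n, fun n => ?_, ?_⟩
  · exact isGδ_of_cm (cm_homeo (auxImageHomeo hf (C n)).symm (hcm n))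
  · rw [← Set.image_iUnion, hC, Set.image_univ]

theorem cmSigma_open {Z : Type u} [tZ : TopologicalSpace Z] (h : CMsigma Z) {u : Set Z}
    (hu : IsOpen u) : CMsigma ↥u := by
  obtain ⟨C, hC, hcm⟩ := h
  refine ⟨fun n => Subtype.val ⁻¹' C n, ?_, fun n => ?_⟩
  · rw [← Set.preimage_iUnion, hC, Set.preimage_univ]
  · have h1 : CompletelyMetrizable ↥(Subtype.val ⁻¹' u : Set ↥(C n)) :=
      cm_open (hcm n) (hu.preimage continuous_subtype_val)
    have h2 : CompletelyMetrizable ↥(u ∩ C n : Set Z) :=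
      cm_homeo ((auxSubHomeo _).trans (Homeomorph.setCongr
        (by rw [Subtype.image_preimage_coe, Set.inter_comm]))).symm h1
    refine cm_homeo ((auxSubHomeo _).trans (Homeomorph.setCongr ?_)) h2
    rw [Subtype.image_preimage_coe, Set.inter_comm]

theorem absGDS_open {Z : Type u} [tZ : TopologicalSpace Z] (h : AbsGdeltaSigma Z) {u : Set Z}
    (hu : IsOpen u) : AbsGdeltaSigma ↥u := by
  haveI := h.1
  exact absGDS_of_cmSigma (cmSigma_open (cmSigma_of_absGDS h) hu)

/-- disjoint relatively open sets in a metric space can be separated by disjoint open sets -/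
theorem aux_separation {Y : Type u} [MetricSpace Y] {ι : Type*} {P : ι → Set Y}
    (hd : Pairwise (Disjoint on P))
    (hrel : ∀ i, ∃ V, IsOpen V ∧ P i = (⋃ j, P j) ∩ V) :
    ∃ W : ι → Set Y, (∀ i, IsOpen (W i)) ∧ (∀ i, P i ⊆ W i) ∧ Pairwise (Disjoint on W) := by
  refine ⟨fun i => {y | EMetric.infEdist y (P i) < EMetric.infEdist y ((⋃ j, P j) \ P i)},
    fun i => isOpen_lt EMetric.continuous_infEdist EMetric.continuous_infEdist, fun i => ?_, ?_⟩
  · intro x hx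
    obtain ⟨V, hVo, hPV⟩ := hrel i
    have h0 : EMetric.infEdist x (P i) = 0 := EMetric.infEdist_zero_of_mem hx
    have hpos : 0 < EMetric.infEdist x ((⋃ j, P j) \ P i) := by
      refine EMetric.infEdist_pos_iff_notMem_closure.2 ?_
      intro hcl
      have hxV : x ∈ V := (hPV ▸ hx).2
      obtain ⟨y, hyV, hyD⟩ := _root_.mem_closure_iff.1 hcl V hVo hxV
      refine hyD.2 ?_
      rw [hPV]
      exact ⟨hyD.1, hyV⟩
    rw [Set.mem_setOf_eq, h0]
    exact hpos
  · intro i j hij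
    rw [Function.onFun, Set.disjoint_left]
    intro y hyi hyj
    have hij' : EMetric.infEdist y ((⋃ l, P l) \ P i) ≤ EMetric.infEdist y (P j) := by
      refine EMetric.infEdist_anti fun x hx => ⟨Set.mem_iUnion.2 ⟨j, hx⟩, fun hxi => ?_⟩
      exact (hd hij).le_bot ⟨hxi, hx⟩
    have hji' : EMetric.infEdist y ((⋃ l, P l) \ P j) ≤ EMetric.infEdist y (P i) := by
      refine EMetric.infEdist_anti fun x hx => ⟨Set.mem_iUnion.2 ⟨i, hx⟩, fun hxj => ?_⟩
      exact (hd hij).le_bot ⟨hx, hxj⟩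
    exact absurd ((hyi.trans_le hij').trans (hyj.trans_le hji'))
      (lt_irrefl _)

theorem absGDS_disjoint_iUnion {Z : Type u} [tZ : TopologicalSpace Z]
    [TopologicalSpace.MetrizableSpace Z] {ι : Type*} {T V : ι → Set Z}
    (hV : ∀ i, IsOpen (V i)) (hTV : ∀ i, T i = (⋃ j, T j) ∩ V i)
    (hd : Pairwise (Disjoint on T)) (h : ∀ i, AbsGdeltaSigma ↥(T i)) :
    AbsGdeltaSigma ↥(⋃ i, T i) := by
  refine ⟨inferInstance, fun Y tY hYm f hf => ?_⟩
  obtain ⟨mY, hmY⟩ : ∃ m : MetricSpace Y, m.toUniformSpace.toTopologicalSpace = tY :=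
    ⟨TopologicalSpace.metrizableSpaceMetric Y, rfl⟩
  subst hmY
  letI : MetricSpace Y := mY
  have hsub : ∀ i, T i ⊆ ⋃ j, T j := fun i => Set.subset_iUnion T i
  let Q : ι → Set Y := fun i => f '' (Subtype.val ⁻¹' T i)
  have hQrange : ∀ i, Q i = Set.range (f ∘ Set.inclusion (hsub i)) := by
    intro i
    rw [Set.range_comp, Set.range_inclusion]
    rfl
  have hQabs : ∀ i, AbsGdeltaSigma ↥(Q i) := by
    intro i
    rw [hQrange i]
    exact absGDS_homeo (auxRangeHomeo (hf.comp (Topology.IsEmbedding.inclusion (hsub i)))) (h i)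
  have hQgds : ∀ i, IsGdeltaSigma (Q i) := by
    intro i
    have := (hQabs i).2 Y Subtype.val IsEmbedding.subtypeVal
    rwa [Subtype.range_val] at this
  have hQd : Pairwise (Disjoint on Q) := by
    intro i j hij
    simp only [Function.onFun, Q]
    rw [Set.disjoint_image_iff hf.injective]
    exact Disjoint.preimage _ (hd hij)
  have hQU : (⋃ i, Q i) = Set.range f := by
    simp only [Q]
    rw [← Set.image_iUnion, ← Set.preimage_iUnion, Subtype.coe_preimage_self,
      Set.image_univ]
  have hQrel : ∀ i, ∃ O, IsOpen O ∧ Q i = (⋃ j, Q j) ∩ O := by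
    intro i
    have hpre : (Subtype.val ⁻¹' T i : Set ↥(⋃ j, T j)) = Subtype.val ⁻¹' V i := by
      rw [hTV i, Set.preimage_inter, Subtype.coe_preimage_self, Set.univ_inter]
    have hopen : IsOpen (Subtype.val ⁻¹' V i : Set ↥(⋃ j, T j)) :=
      (hV i).preimage continuous_subtype_val
    rw [hf.isInducing.isOpen_iff] at hopen
    obtain ⟨O, hOo, hOp⟩ := hopen
    refine ⟨O, hOo, ?_⟩
    rw [hQU]
    show f '' (Subtype.val ⁻¹' T i) = _
    rw [hpre, ← hOp, Set.image_preimage_eq_inter_range, Set.inter_comm]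
  obtain ⟨W, hWo, hPW, hWd⟩ := aux_separation hQd hQrel
  have h' : ∀ i, ∃ G : ℕ → Set Y, (∀ n, IsGδ (G n)) ∧ Q i = ⋃ n, G n := fun i => hQgds i
  choose G hGδ hQG using h'
  refine ⟨fun m => ⋃ i, (G i m ∩ W i), fun m => ?_, ?_⟩
  · refine auxGdelta_disjoint_iUnion hWo hWd (fun i => (hGδ i m).inter (hWo i).isGδ)
      (fun i => Set.inter_subset_right)
  · rw [← hQU]
    ext y
    simp only [Set.mem_iUnion, Set.mem_inter_iff]
    constructor
    · rintro ⟨i, hyQ⟩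
      rw [hQG i] at hyQ
      obtain ⟨m, hm⟩ := Set.mem_iUnion.1 hyQ
      exact ⟨m, i, hm, hPW i (by rw [hQG i]; exact Set.mem_iUnion.2 ⟨m, hm⟩)⟩
    · rintro ⟨m, i, hyG, -⟩
      exact ⟨i, by rw [hQG i]; exact Set.mem_iUnion.2 ⟨m, hyG⟩⟩

/-- `SLWplusGDS` is inherited by open subsets. -/
theorem slwgds_open_subset {X : Type u} [tX : TopologicalSpace X]
    {k : Cardinal.{u}} {s u : Set X}
    (h : SLWplusGDS ↥s k) (hu : IsOpen u) (hus : u ⊆ s) : SLWplusGDS ↥u k := by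
  obtain ⟨A, B, hAB, hA, hB⟩ := slwgds_subtype_iff.1 h
  refine slwgds_subtype_iff.2 ⟨A ∩ u, B ∩ u, ?_, ?_, ?_⟩
  · rw [← Set.union_inter_distrib_right, hAB, Set.inter_eq_right.2 hus]
  · exact sigmaLW_of_isEmbedding
      (Topology.IsEmbedding.inclusion (Set.inter_subset_left : A ∩ u ⊆ A)) hA
  · have h1 : AbsGdeltaSigma ↥(Subtype.val ⁻¹' u : Set ↥B) :=
      absGDS_open hB (hu.preimage continuous_subtype_val)
    exact absGDS_homeo ((auxSubHomeo _).trans (Homeomorph.setCongr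
      (by rw [Subtype.image_preimage_coe, Set.inter_comm]))) h1

/-- master combination lemma: disjoint relatively-open union of `SLWplusGDS` pieces. -/
theorem slwgds_disjoint_iUnion {X : Type u} [tX : TopologicalSpace X]
    [TopologicalSpace.MetrizableSpace X] {k : Cardinal.{u}} {ι : Type*} {T V : ι → Set X}
    (hV : ∀ i, IsOpen (V i)) (hTV : ∀ i, T i = (⋃ j, T j) ∩ V i)
    (hd : Pairwise (Disjoint on T)) (h : ∀ i, SLWplusGDS ↥(T i) k) :
    SLWplusGDS ↥(⋃ i, T i) k := by
  have h' : ∀ i, ∃ A B : Set X, A ∪ B = T i ∧ SigmaLW ↥A k ∧ AbsGdeltaSigma ↥B :=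
    fun i => slwgds_subtype_iff.1 (h i)
  choose A B hABT hA hB using h'
  have hAT : ∀ i, A i ⊆ T i := fun i => (hABT i) ▸ Set.subset_union_left
  have hBT : ∀ i, B i ⊆ T i := fun i => (hABT i) ▸ Set.subset_union_right
  have hTVsub : ∀ i, T i ⊆ V i := fun i => (hTV i) ▸ Set.inter_subset_right
  -- generic: any family of subsets R i ⊆ T i is relatively open w.r.t. V i in its union
  have hkey : ∀ (R : ι → Set X), (∀ i, R i ⊆ T i) → ∀ i, R i = (⋃ j, R j) ∩ V i := by
    intro R hR i
    apply Set.Subset.antisymm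
    · exact Set.subset_inter (Set.subset_iUnion R i) ((hR i).trans (hTVsub i))
    · rintro y ⟨hyU, hyV⟩
      obtain ⟨j, hyj⟩ := Set.mem_iUnion.1 hyU
      rcases eq_or_ne j i with rfl | hne
      · exact hyj
      · exfalso
        have hyTi : y ∈ T i := (hTV i) ▸ ⟨Set.mem_iUnion.2 ⟨j, hR j hyj⟩, hyV⟩
        exact (hd hne).le_bot ⟨hR j hyj, hyTi⟩
  have hdR : ∀ (R : ι → Set X), (∀ i, R i ⊆ T i) → Pairwise (Disjoint on R) :=
    fun R hR i j hij => Set.disjoint_of_subset (hR i) (hR j) (hd hij)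
  refine slwgds_subtype_iff.2 ⟨⋃ i, A i, ⋃ i, B i, ?_, ?_, ?_⟩
  · rw [← Set.iUnion_union_distrib]
    exact Set.iUnion_congr hABT
  · exact sigmaLW_disjoint_iUnion hV (hkey A hAT) (hdR A hAT) hA
  · exact absGDS_disjoint_iUnion hV (hkey B hBT) (hdR B hBT) hB

theorem slwgds_iUnion_nat' {X : Type u} [tX : TopologicalSpace X]
    [TopologicalSpace.MetrizableSpace X] {k : Cardinal.{u}} {S : ℕ → Set X}
    (hS : (⋃ n, S n) = Set.univ) (h : ∀ n, SLWplusGDS ↥(S n) k) : SLWplusGDS X k := by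
  have h' : ∀ n, ∃ A B : Set X, A ∪ B = S n ∧ SigmaLW ↥A k ∧ AbsGdeltaSigma ↥B :=
    fun n => slwgds_subtype_iff.1 (h n)
  choose A B hABS hA hB using h'
  refine ⟨⋃ n, A n, ⋃ n, B n, ?_, sigmaLW_iUnion_nat hA, absGDS_iUnion_nat hB⟩
  rw [← Set.iUnion_union_distrib]
  rw [Set.iUnion_congr hABS]
  exact hS

theorem slwgds_of_locally {X : Type u} [tX : TopologicalSpace X]
    [TopologicalSpace.MetrizableSpace X] {k : Cardinal.{u}}
    (h : ∀ x : X, ∃ s : Set X, s ∈ nhds x ∧ SLWplusGDS ↥s k) : SLWplusGDS X k := by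
  choose s hs hsP using h
  obtain ⟨m, hm⟩ : ∃ m : MetricSpace X, m.toUniformSpace.toTopologicalSpace = tX :=
    ⟨TopologicalSpace.metrizableSpaceMetric X, rfl⟩
  subst hm
  letI : MetricSpace X := m
  let o : X → Set X := fun a => interior (s a)
  have hoo : ∀ a, IsOpen (o a) := fun a => isOpen_interior
  have hxo : ∀ a, a ∈ o a := fun a => mem_interior_iff_mem_nhds.2 (hs a)
  have hos : ∀ a, o a ⊆ s a := fun a => interior_subset
  let r : X → X → Prop := WellOrderingRel
  have hwf : WellFounded r := WellOrderingRel.isWellOrder.toIsWellFounded.wf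
  -- the centers
  let C : ℕ → X → Set X := fun n a =>
    {y | Metric.ball y (1 / (n + 1)) ⊆ o a ∧ ∀ b, r b a → y ∉ o b}
  -- the disjoint open pieces
  let E : ℕ → X → Set X := fun n a => ⋃ y ∈ C n a, Metric.ball y (1 / (3 * (n + 1)))
  have hr31 : ∀ n : ℕ, (1 : ℝ) / (3 * (n + 1)) ≤ 1 / (n + 1) := by
    intro n
    apply one_div_le_one_div_of_le
    · positivity
    · nlinarith [Nat.cast_nonneg (α := ℝ) n]
  have hr3pos : ∀ n : ℕ, (0 : ℝ) < 1 / (3 * (n + 1)) := by intro n; positivity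
  have hEo : ∀ n a, IsOpen (E n a) := fun n a =>
    isOpen_biUnion fun y _ => Metric.isOpen_ball
  have hEsub : ∀ n a, E n a ⊆ o a := by
    rintro n a z hz
    obtain ⟨y, hy, hzy⟩ := Set.mem_iUnion₂.1 hz
    exact hy.1 (Metric.ball_subset_ball (hr31 n) hzy)
  have hEdis : ∀ n : ℕ, Pairwise (Disjoint on fun a => E n a) := by
    intro n a b hab
    simp only [Function.onFun, Set.disjoint_left]
    intro z hza hzb
    obtain ⟨y, hy, hzy⟩ := Set.mem_iUnion₂.1 hza
    obtain ⟨y', hy', hzy'⟩ := Set.mem_iUnion₂.1 hzb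
    have hdyy : dist y y' < 1 / (n + 1) := by
      have h1 := Metric.mem_ball.1 hzy
      have h2 := Metric.mem_ball.1 hzy'
      calc dist y y' ≤ dist z y + dist z y' := dist_triangle_left y y' z
        _ < 1 / (3 * (n + 1)) + 1 / (3 * (n + 1)) := by linarith
        _ ≤ 1 / (n + 1) := by
            rw [← add_div]
            rw [div_le_div_iff₀ (by positivity) (by positivity)]
            nlinarith [Nat.cast_nonneg (α := ℝ) n]
    rcases trichotomous_of r a b with hlt | heq | hgt
    · -- r a b : y' (center for b) avoids o a, but y' ∈ ball y (1/(n+1)) ⊆ o a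
      exact hy'.2 a hlt (hy.1 (Metric.mem_ball.2 (by rw [dist_comm]; exact hdyy)))
    · exact hab heq
    · exact hy.2 b hgt (hy'.1 (Metric.mem_ball.2 hdyy))
  have hcover : (⋃ n : ℕ, ⋃ a, E n a) = Set.univ := by
    rw [Set.eq_univ_iff_forall]
    intro x
    have hne : ({a | x ∈ o a}).Nonempty := ⟨x, hxo x⟩
    set a0 := hwf.min {a | x ∈ o a} hne with ha0
    have hx0 : x ∈ o a0 := hwf.min_mem _ hne
    have hmin : ∀ b, r b a0 → x ∉ o b := fun b hb hxb => hwf.not_lt_min {a | x ∈ o a} hxb hb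
    obtain ⟨ε, hε, hball⟩ := Metric.isOpen_iff.1 (hoo a0) x hx0
    obtain ⟨n, hn⟩ := exists_nat_one_div_lt hε
    have hxC : x ∈ C n a0 :=
      ⟨fun y hy => hball (Metric.ball_subset_ball hn.le hy), hmin⟩
    refine Set.mem_iUnion.2 ⟨n, Set.mem_iUnion.2 ⟨a0, ?_⟩⟩
    exact Set.mem_iUnion₂.2 ⟨x, hxC, Metric.mem_ball_self (hr3pos n)⟩
  refine slwgds_iUnion_nat' hcover fun n => ?_
  refine slwgds_disjoint_iUnion (V := fun a => E n a) (hEo n) ?_ (hEdis n) ?_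
  · intro a
    exact (Set.subset_inter (Set.subset_iUnion _ a) (Set.Subset.refl _)).antisymm
      Set.inter_subset_right |>.symm |>.symm
  · intro a
    exact slwgds_open_subset (hsP a) (hEo n a) ((hEsub n a).trans (hos a))

end Aux

/-- (1) If a metrizable strongly zero-dimensional space `X` is locally
`σLW(<k) + 𝒢_δσ`, then `X ∈ σLW(<k) + 𝒢_δσ`.  (2) A countable union of subspaces in
`σLW(<k) + 𝒢_δσ` is in `σLW(<k) + 𝒢_δσ`. -/
theorem stmt_0 (k : Cardinal.{u}) (hk : Cardinal.aleph0 ≤ k)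
    (X : Type u) [TopologicalSpace X] [TopologicalSpace.MetrizableSpace X]
    (hX : StronglyZeroDim X) :
    ((∀ x : X, ∃ s : Set X, s ∈ nhds x ∧ SLWplusGDS ↥s k) → SLWplusGDS X k) ∧
    (∀ S : ℕ → Set X, (⋃ n, S n) = Set.univ → (∀ n, SLWplusGDS ↥(S n) k) →
      SLWplusGDS X k) := by
  exact ⟨fun h => slwgds_of_locally h, fun S hS h => slwgds_iUnion_nat' hS h⟩
end

section
/- Let A_i be a nowhere dense closed subset of an h-homogeneous metric space (X_i, ρ_i) for i ∈ {1, 2}, and let g : X₁ → X₂ be a homeomorphism such that g(A₁) = A₂. Then for every homeomorphism f₀ : A₁ → A₂ and every ε > 0 satisfying sup{ρ₂(g(a), f₀(a)) : a ∈ A₁} < ε, there exists a homeomorphism f : X₁ → X₂ such that f restricted to A₁ equals f₀ and sup{ρ₂(g(x), f(x)) : x ∈ X₁} < ε. -/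
open Topology Set Filter

universe u v

section KRAux

variable {X : Type*} [MetricSpace X]

lemma clopen_between (hz : StronglyZeroDim X) {s u : Set X} (hs : IsClosed s)
    (hu : IsOpen u) (hsu : s ⊆ u) : ∃ t, IsClopen t ∧ s ⊆ t ∧ t ⊆ u := by
  obtain ⟨t, ht, hst, hd⟩ := hz s uᶜ hs hu.isClosed_compl
    (disjoint_compl_right.mono_left hsu)
  exact ⟨t, ht, hst, by
    intro x hx
    by_contra hxu
    exact hd.le_bot ⟨hxu, hx⟩⟩

lemma clopen_partition (hz : StronglyZeroDim X) {E : Set X} (hE : IsClopen E)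
    {r : ℝ} (hr : 0 < r) :
    ∃ Pa : Set (Set X),
      (∀ w ∈ Pa, IsClopen w ∧ w.Nonempty ∧ ∃ x₀ ∈ E, w ⊆ Metric.ball x₀ r) ∧
      (Pa.Pairwise fun w w' => Disjoint w w') ∧ ⋃₀ Pa = E ∧
      (∀ Qa ⊆ Pa, IsClopen (⋃₀ Qa)) := by
  classical
  -- open cover
  set u : X → Set X := fun x => if x ∈ E then Metric.ball x r else Eᶜ with hu
  have uo : ∀ x, IsOpen (u x) := by
    intro x; by_cases h : x ∈ E <;> simp [hu, h, Metric.isOpen_ball, hE.1.isOpen_compl]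
  have uc : ⋃ x, u x = univ := by
    apply eq_univ_of_forall
    intro x
    by_cases h : x ∈ E
    · exact mem_iUnion.2 ⟨x, by simp [hu, h, Metric.mem_ball, hr]⟩
    · exact mem_iUnion.2 ⟨x, by simp [hu, h]⟩
  obtain ⟨v, vo, vc, vlf, vu⟩ := precise_refinement u uo uc
  obtain ⟨w, wc, wo, hw⟩ := exists_iUnion_eq_closure_subset vo (fun x => vlf.point_finite x) vc
  -- clopenize
  have hK : ∀ i, ∃ K, IsClopen K ∧ closure (w i) ⊆ K ∧ K ⊆ v i := fun i =>
    clopen_between hz isClosed_closure (vo i) (hw i)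
  choose K Kc KW KV using hK
  have Klf : LocallyFinite K := vlf.subset KV
  -- disjointify by a well order
  letI : IsWellOrder X WellOrderingRel := WellOrderingRel.isWellOrder
  set P : X → Set X := fun i => K i \ ⋃ j : {j // WellOrderingRel j i}, K j.1 with hP
  have Qc : ∀ i, IsClopen (⋃ j : {j // WellOrderingRel j i}, K j.1) := by
    intro i
    constructor
    · exact (Klf.comp_injective Subtype.val_injective).isClosed_iUnion fun j => (Kc _).1
    · exact isOpen_iUnion fun j => (Kc _).2
  have Pc : ∀ i, IsClopen (P i) := fun i => (Kc i).diff (Qc i)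
  have Pd : ∀ i j, i ≠ j → Disjoint (P i) (P j) := by
    intro i j hij
    rcases trichotomous_of WellOrderingRel i j with h | h | h
    · refine disjoint_left.2 fun x hx hx' => ?_
      exact hx'.2 (mem_iUnion.2 ⟨⟨i, h⟩, hx.1⟩)
    · exact absurd h hij
    · refine disjoint_left.2 fun x hx hx' => ?_
      exact hx.2 (mem_iUnion.2 ⟨⟨j, h⟩, hx'.1⟩)
  have Pcov : ∀ x : X, ∃ i, x ∈ P i := by
    intro x
    have hne : {i | x ∈ K i}.Nonempty := by
      have : x ∈ ⋃ i, w i := wc ▸ mem_univ x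
      rcases mem_iUnion.1 this with ⟨i, hi⟩
      exact ⟨i, KW i (subset_closure hi)⟩
    obtain hmin := (IsWellFounded.wf (r := WellOrderingRel)).min_mem _ hne
    refine ⟨_, hmin, ?_⟩
    intro hx
    rcases mem_iUnion.1 hx with ⟨⟨j, hj⟩, hjK⟩
    exact (IsWellFounded.wf (r := WellOrderingRel)).not_lt_min {i | x ∈ K i} (x := j) hjK hj
  -- the pieces
  refine ⟨{p | p.Nonempty ∧ ∃ i, p = P i ∩ E}, ?_, ?_, ?_, ?_⟩
  · rintro p ⟨hne, i, rfl⟩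
    refine ⟨(Pc i).inter hE, hne, ?_⟩
    by_cases hiE : i ∈ E
    · refine ⟨i, hiE, ?_⟩
      have : P i ⊆ u i := fun x hx => vu i (KV i hx.1)
      rw [hu] at this
      simp only [if_pos hiE] at this
      exact fun x hx => this hx.1
    · exfalso
      obtain ⟨x, hx⟩ := hne
      have : P i ⊆ u i := fun y hy => vu i (KV i hy.1)
      rw [hu] at this
      simp only [if_neg hiE] at this
      exact this hx.1 hx.2
  · rintro p ⟨hne, i, rfl⟩ q ⟨hne', j, rfl⟩ hpq
    have hij : i ≠ j := by rintro rfl; exact hpq rfl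
    exact ((Pd i j hij).mono inter_subset_left inter_subset_left)
  · apply subset_antisymm
    · rintro x ⟨p, ⟨hne, i, rfl⟩, hx⟩
      exact hx.2
    · intro x hx
      obtain ⟨i, hi⟩ := Pcov x
      exact ⟨P i ∩ E, ⟨⟨x, hi, hx⟩, i, rfl⟩, hi, hx⟩
  · intro Qa hQa
    have : ⋃₀ Qa = ⋃ i : {i // P i ∩ E ∈ Qa}, (P i.1 ∩ E) := by
      apply subset_antisymm
      · rintro x ⟨p, hp, hx⟩
        obtain ⟨hne, i, rfl⟩ := hQa hp
        exact mem_iUnion.2 ⟨⟨i, hp⟩, hx⟩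
      · rintro x hx
        rcases mem_iUnion.1 hx with ⟨⟨i, hi⟩, hxi⟩
        exact ⟨P i ∩ E, hi, hxi⟩
    rw [this]
    constructor
    · refine LocallyFinite.isClosed_iUnion ?_ fun i => ((Pc _).inter hE).1
      have lf2 : LocallyFinite (fun i : X => P i ∩ E) :=
        vlf.subset fun i => inter_subset_left.trans (diff_subset.trans (KV i))
      exact lf2.comp_injective Subtype.val_injective
    · exact isOpen_iUnion fun i => ((Pc _).inter hE).2

lemma embed_clopen {F : X → X} (hFe : Topology.IsEmbedding F)
    (hFo : IsOpenMap F) (hFc : IsClosedMap F) {s : Set X} (hs : IsClopen s) :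
    IsClopen (F '' s) ∧ Nonempty (↥s ≃ₜ ↥(F '' s)) := by
  refine ⟨⟨hFc s hs.1, hFo s hs.2⟩, ⟨?_⟩⟩
  have h1 : Topology.IsEmbedding (s.restrict F) :=
    hFe.comp Topology.IsEmbedding.subtypeVal
  exact h1.toHomeomorph.trans (Homeomorph.setCongr (Set.range_restrict F s))

lemma exists_C_system (hz : StronglyZeroDim X) {B : Set X} (hB : IsClosed B) :
    ∃ C : ℕ → Set X, (∀ n, IsClopen (C n)) ∧ (∀ n, B ⊆ C n) ∧
      (∀ n, C (n + 1) ⊆ C n) ∧ ∀ n, C n ⊆ {x | Metric.infDist x B < (2:ℝ)⁻¹ ^ n} := by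
  classical
  have step : ∀ (n : ℕ) (D : Set X), IsClopen D → B ⊆ D →
      ∃ C', (IsClopen C' ∧ B ⊆ C') ∧ C' ⊆ D ∧
        C' ⊆ {x | Metric.infDist x B < (2:ℝ)⁻¹ ^ n} := by
    intro n D hD hBD
    have hopen : IsOpen (D ∩ {x | Metric.infDist x B < (2:ℝ)⁻¹ ^ n}) :=
      hD.2.inter (isOpen_lt (Metric.continuous_infDist_pt B) continuous_const)
    have hsub : B ⊆ D ∩ {x | Metric.infDist x B < (2:ℝ)⁻¹ ^ n} := by
      intro x hx
      refine ⟨hBD hx, ?_⟩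
      simp only [mem_setOf_eq, Metric.infDist_zero_of_mem hx]
      positivity
    obtain ⟨tt, ht, h1, h2⟩ := clopen_between hz hB hopen hsub
    exact ⟨tt, ⟨ht, h1⟩, h2.trans inter_subset_left, h2.trans inter_subset_right⟩
  choose! f hf1 hf2 hf3 using step
  let Cs : ℕ → {s : Set X // IsClopen s ∧ B ⊆ s} := fun n =>
    Nat.rec ⟨f 0 univ, hf1 0 univ isClopen_univ (subset_univ B)⟩
      (fun n p => ⟨f (n + 1) p.1, hf1 (n + 1) p.1 p.2.1 p.2.2⟩) n
  refine ⟨fun n => (Cs n).1, fun n => (Cs n).2.1, fun n => (Cs n).2.2, ?_, ?_⟩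
  · intro n
    exact hf2 (n + 1) (Cs n).1 (Cs n).2.1 (Cs n).2.2
  · intro n
    cases n with
    | zero => exact hf3 0 univ isClopen_univ (subset_univ B)
    | succ m => exact hf3 (m + 1) (Cs m).1 (Cs m).2.1 (Cs m).2.2

lemma allocation (hz : StronglyZeroDim X) (hh : HHomogeneous X)
    {B O : Set X} (hB : IsClosed B) (hBd : Dense Bᶜ) (hO : IsClopen O)
    (hOB : Disjoint O B) {t : ℝ} (ht : 0 < t) {ι : Type*} (w : ι → Set X)
    (hwc : ∀ i, IsClopen (w i)) (hwne : ∀ i, (w i).Nonempty)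
    (hwd : Pairwise (Function.onFun Disjoint w))
    (hsub : ∀ s : Set ι, IsClosed (⋃ i ∈ s, w i))
    (loc : ι → X) (hloc : ∀ i, loc i ∈ B) :
    ∃ v : ι → Set X,
      (∀ i, IsClopen (v i)) ∧ (∀ i, (v i).Nonempty) ∧
      (∀ i, v i ⊆ Metric.ball (loc i) (3 * t)) ∧
      (∀ i, Disjoint (v i) (B ∪ O)) ∧
      (∀ i, Nonempty (↥(w i) ≃ₜ ↥(v i))) ∧
      Pairwise (Function.onFun Disjoint v) ∧
      IsClopen (⋃ i, v i) := by
  classical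
  -- fresh points near each location
  have hy : ∀ i, ∃ y, y ∈ Metric.ball (loc i) t ∧ y ∉ B ∧ y ∉ O := by
    intro i
    have hopen : IsOpen (Metric.ball (loc i) t ∩ Oᶜ) :=
      Metric.isOpen_ball.inter hO.1.isOpen_compl
    have hne : (Metric.ball (loc i) t ∩ Oᶜ).Nonempty :=
      ⟨loc i, Metric.mem_ball_self ht, fun h => hOB.le_bot ⟨h, hloc i⟩⟩
    obtain ⟨yy, hy1, hy2⟩ := hBd.exists_mem_open hopen hne
    exact ⟨yy, hy2.1, hy1, hy2.2⟩
  choose y hy1 hy2 hy3 using hy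
  -- maximal t-separated subset of the chosen points
  have hchain : ∀ c ⊆ {T : Set X | T ⊆ Set.range y ∧ T.Pairwise fun a b => t ≤ dist a b},
      IsChain (· ⊆ ·) c → ∃ ub ∈ {T : Set X | T ⊆ Set.range y ∧
        T.Pairwise fun a b => t ≤ dist a b}, ∀ s ∈ c, s ⊆ ub := by
    intro c hcS hc
    refine ⟨⋃₀ c, ⟨?_, ?_⟩, fun s hs => subset_sUnion_of_mem hs⟩
    · exact sUnion_subset fun s hs => (hcS hs).1
    · rintro a ⟨s, hs, has⟩ b ⟨s', hs', hbs'⟩ hab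
      rcases hc.total hs hs' with h | h
      · exact (hcS hs').2 (h has) hbs' hab
      · exact (hcS hs).2 has (h hbs') hab
  obtain ⟨M, hMmax⟩ := zorn_subset
    {T : Set X | T ⊆ Set.range y ∧ T.Pairwise fun a b => t ≤ dist a b} hchain
  have hM := hMmax.prop
  have hnear : ∀ i, ∃ z ∈ M, dist (y i) z < t := by
    intro i
    by_cases hyM : y i ∈ M
    · exact ⟨y i, hyM, by simpa using ht⟩
    by_contra hcon
    push_neg at hcon
    have : insert (y i) M ∈
        {T : Set X | T ⊆ Set.range y ∧ T.Pairwise fun a b => t ≤ dist a b} := by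
      constructor
      · exact insert_subset ⟨i, rfl⟩ hM.1
      · refine (@Set.pairwise_insert_of_symm _ _ _ _ ⟨?_⟩) |>.2 ⟨hM.2, ?_⟩
        · intro a b hab; rwa [dist_comm]
        · intro z hzM _
          exact hcon z hzM
    have := hMmax.eq_of_subset this (subset_insert _ _)
    exact hyM (this ▸ mem_insert _ _)
  choose ζ hζM hζd using hnear
  -- disjoint clopen windows around the separated points
  have hWex : ∀ z ∈ M, ∃ Wz, IsClopen Wz ∧ z ∈ Wz ∧ Wz ⊆ Metric.ball z (t / 4) ∧
      Disjoint Wz (B ∪ O) := by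
    intro z hzM
    obtain ⟨i, rfl⟩ := hM.1 hzM
    have hopen : IsOpen (Metric.ball (y i) (t / 4) ∩ (B ∪ O)ᶜ) :=
      Metric.isOpen_ball.inter (hB.union hO.1).isOpen_compl
    have hmem : y i ∈ Metric.ball (y i) (t / 4) ∩ (B ∪ O)ᶜ := by
      refine ⟨Metric.mem_ball_self (by linarith), ?_⟩
      intro h
      rcases h with h | h
      · exact hy2 i h
      · exact hy3 i h
    obtain ⟨Wz, hWz, h1, h2⟩ := clopen_between hz isClosed_singleton hopen
      (singleton_subset_iff.2 hmem)
    refine ⟨Wz, hWz, h1 rfl, h2.trans inter_subset_left, ?_⟩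
    refine disjoint_left.2 fun x hx hxBO => ?_
    exact (h2 hx).2 hxBO
  choose! W hWc hWz hWball hWd using hWex
  -- homeomorphisms of X onto the windows
  have hhom : ∀ z ∈ M, Nonempty (↥(W z) ≃ₜ X) := by
    intro z hzM
    exact hh (W z) (hWc z hzM) ⟨z, hWz z hzM⟩
  have hFex : ∀ z ∈ M, ∃ F : X → X, Topology.IsEmbedding F ∧ IsOpenMap F ∧
      IsClosedMap F ∧ range F ⊆ W z := by
    intro z hzM
    obtain ⟨e⟩ := hhom z hzM
    refine ⟨fun x => ((e.symm x : ↥(W z)) : X), ?_, ?_, ?_, ?_⟩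
    · exact Topology.IsEmbedding.subtypeVal.comp e.symm.isEmbedding
    · exact ((hWc z hzM).2.isOpenEmbedding_subtypeVal.isOpenMap).comp e.symm.isOpenMap
    · exact ((hWc z hzM).1.isClosedEmbedding_subtypeVal.isClosedMap).comp e.symm.isClosedMap
    · rintro x ⟨x', rfl⟩
      exact (e.symm x').2
  choose! F hFe hFo hFc hFr using hFex
  set v : ι → Set X := fun i => F (ζ i) '' w i with hv
  have hvW : ∀ i, v i ⊆ W (ζ i) := by
    intro i
    exact (image_subset_range _ _).trans (hFr (ζ i) (hζM i))
  have hWdisj : ∀ z ∈ M, ∀ z' ∈ M, z ≠ z' → Disjoint (W z) (W z') := by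
    intro z hz z' hz' hne
    refine disjoint_left.2 fun x hx hx' => ?_
    have h1 := hWball z hz hx
    have h2 := hWball z' hz' hx'
    have : dist z z' ≤ dist x z + dist x z' := dist_triangle_left _ _ _
    have ht' := hM.2 hz hz' hne
    simp only [Metric.mem_ball] at h1 h2
    linarith
  refine ⟨v, ?_, ?_, ?_, ?_, ?_, ?_, ?_⟩
  · intro i
    exact (embed_clopen (hFe _ (hζM i)) (hFo _ (hζM i)) (hFc _ (hζM i)) (hwc i)).1
  · intro i
    exact (hwne i).image _
  · intro i
    intro x hx
    have h1 : x ∈ W (ζ i) := hvW i hx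
    have h2 := hWball _ (hζM i) h1
    have h3 := hζd i
    have h4 := hy1 i
    simp only [Metric.mem_ball] at *
    have t1 : dist x (loc i) ≤ dist x (ζ i) + dist (ζ i) (y i) + dist (y i) (loc i) :=
      dist_triangle4 x (ζ i) (y i) (loc i)
    rw [dist_comm (ζ i) (y i)] at t1
    linarith
  · intro i
    exact (hWd _ (hζM i)).mono_left (hvW i)
  · intro i
    exact (embed_clopen (hFe _ (hζM i)) (hFo _ (hζM i)) (hFc _ (hζM i)) (hwc i)).2
  · intro i j hij
    by_cases hzz : ζ i = ζ j
    · simp only [hv, Function.onFun]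
      rw [hzz]
      exact (Set.disjoint_image_of_injective (hFe _ (hζM j)).injective (hwd hij))
    · exact (hWdisj _ (hζM i) _ (hζM j) hzz).mono (hvW i) (hvW j)
  · constructor
    · -- closed
      have hrw : ⋃ i, v i = ⋃ z : ↥M, F z.1 '' (⋃ i ∈ {i | ζ i = z.1}, w i) := by
        apply subset_antisymm
        · intro x hx
          rcases mem_iUnion.1 hx with ⟨i, hi⟩
          refine mem_iUnion.2 ⟨⟨ζ i, hζM i⟩, ?_⟩
          refine image_mono ?_ hi
          exact subset_biUnion_of_mem (u := fun j => w j) (show i ∈ {j | ζ j = ζ i} from rfl)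
        · intro x hx
          rcases mem_iUnion.1 hx with ⟨⟨z, hzM⟩, hxz⟩
          rcases hxz with ⟨x', hx', rfl⟩
          rcases mem_iUnion₂.1 hx' with ⟨i, hi, hxi⟩
          exact mem_iUnion.2 ⟨i, by rw [hv]; exact ⟨x', hxi, by rw [← hi]⟩⟩
      rw [hrw]
      refine LocallyFinite.isClosed_iUnion ?_ ?_
      · intro x
        refine ⟨Metric.ball x (t / 5), Metric.ball_mem_nhds x (by linarith), ?_⟩
        have hkey : ∀ z : ↥M, (F z.1 '' (⋃ i ∈ {i | ζ i = z.1}, w i) ∩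
            Metric.ball x (t / 5)).Nonempty → z.1 ∈ Metric.ball x (t / 5 + t / 4) := by
          rintro ⟨z, hzM⟩ ⟨p, hp1, hp2⟩
          have hpW : p ∈ W z := (image_subset_range _ _).trans (hFr z hzM) hp1
          have := hWball z hzM hpW
          simp only [Metric.mem_ball] at *
          calc dist z x ≤ dist p z + dist p x := dist_triangle_left _ _ _
          _ < t / 4 + t / 5 := by linarith
          _ = t / 5 + t / 4 := by ring
        have hsubsing : {z : ↥M | (F z.1 '' (⋃ i ∈ {i | ζ i = z.1}, w i) ∩
            Metric.ball x (t / 5)).Nonempty}.Subsingleton := by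
          rintro ⟨z, hz⟩ h1 ⟨z', hz'⟩ h2
          by_contra hne
          have hzz' : z ≠ z' := fun h => hne (Subtype.ext h)
          have ha := hkey ⟨z, hz⟩ h1
          have hb := hkey ⟨z', hz'⟩ h2
          have := hM.2 hz hz' hzz'
          simp only [Metric.mem_ball] at ha hb
          have : dist z z' ≤ dist z x + dist x z' := dist_triangle _ _ _
          rw [dist_comm x z'] at this
          have ht2 := hM.2 hz hz' hzz'
          linarith
        exact hsubsing.finite
      · rintro ⟨z, hzM⟩
        exact (hFc z hzM) _ (hsub {i | ζ i = z})
    · exact isOpen_iUnion fun i =>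
        (embed_clopen (hFe _ (hζM i)) (hFo _ (hζM i)) (hFc _ (hζM i)) (hwc i)).1.2

/-! ### Pieces and gluing -/

open Classical in
noncomputable def extEquiv {B : Set X} (φe : ↥B ≃ₜ ↥B) : X → X := fun x =>
  if h : x ∈ B then (φe ⟨x, h⟩ : X) else x

lemma extEquiv_of_mem {B : Set X} (φe : ↥B ≃ₜ ↥B) {x : X} (hx : x ∈ B) :
    extEquiv φe x = (φe ⟨x, hx⟩ : X) := by simp [extEquiv, hx]

lemma extEquiv_mem {B : Set X} (φe : ↥B ≃ₜ ↥B) {x : X} (hx : x ∈ B) :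
    extEquiv φe x ∈ B := by
  rw [extEquiv_of_mem φe hx]; exact (φe ⟨x, hx⟩).2

lemma extEquiv_of_not_mem {B : Set X} (φe : ↥B ≃ₜ ↥B) {x : X} (hx : x ∉ B) :
    extEquiv φe x = x := by simp [extEquiv, hx]

lemma extEquiv_symm_apply {B : Set X} (φe : ↥B ≃ₜ ↥B) {x : X} (hx : x ∈ B) :
    extEquiv φe.symm (extEquiv φe x) = x := by
  rw [extEquiv_of_mem φe hx, extEquiv_of_mem φe.symm (φe ⟨x, hx⟩).2]
  have : (⟨((φe ⟨x, hx⟩ : ↥B) : X), (φe ⟨x, hx⟩).2⟩ : ↥B) = φe ⟨x, hx⟩ :=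
    Subtype.coe_eta _ _
  rw [this, Homeomorph.symm_apply_apply]

structure Piece (X : Type*) [MetricSpace X] where
  u : Set X
  v : Set X
  n : ℕ
  α : X
  tgt : Bool
  e : ↥u ≃ₜ ↥v

def PieceOK (B : Set X) (C : ℕ → Set X) (n₀ : ℕ) (φf ψf : X → X) (p : Piece X) : Prop :=
  IsClopen p.u ∧ IsClopen p.v ∧ n₀ ≤ p.n ∧ p.α ∈ B ∧
  p.u ⊆ C n₀ \ B ∧ p.v ⊆ C n₀ \ B ∧
  (p.tgt = false → p.u ∩ C (p.n + 1) = ∅ ∧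
     p.u ⊆ Metric.ball p.α (4 * (2:ℝ)⁻¹ ^ p.n) ∧
     p.v ⊆ Metric.ball (φf p.α) (4 * (2:ℝ)⁻¹ ^ p.n)) ∧
  (p.tgt = true → p.v ∩ C (p.n + 1) = ∅ ∧
     p.v ⊆ Metric.ball p.α (4 * (2:ℝ)⁻¹ ^ p.n) ∧
     p.u ⊆ Metric.ball (ψf p.α) (4 * (2:ℝ)⁻¹ ^ p.n))

def Piece.flip (p : Piece X) : Piece X := ⟨p.v, p.u, p.n, p.α, !p.tgt, p.e.symm⟩

lemma PieceOK.flip {B : Set X} {C : ℕ → Set X} {n₀ : ℕ} {φf ψf : X → X} {p : Piece X}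
    (h : PieceOK B C n₀ φf ψf p) : PieceOK B C n₀ ψf φf p.flip := by
  obtain ⟨h1, h2, h3, h4, h5, h6, h7, h8⟩ := h
  refine ⟨h2, h1, h3, h4, h6, h5, ?_, ?_⟩
  · intro ht
    have hpt : p.tgt = true := by simpa [Piece.flip] using ht
    exact h8 hpt
  · intro ht
    have hpt : p.tgt = false := by simpa [Piece.flip] using ht
    exact h7 hpt

lemma forward_fun {B : Set X} (hB : IsClosed B) {C : ℕ → Set X}
    (hC : ∀ n, IsClopen (C n)) (hCB : ∀ n, B ⊆ C n) (hCd : ∀ m n, m ≤ n → C n ⊆ C m)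
    {n₀ : ℕ} (φe : ↥B ≃ₜ ↥B) {P : Set (Piece X)}
    (h1 : ∀ p ∈ P, PieceOK B C n₀ (extEquiv φe) (extEquiv φe.symm) p)
    (h2 : P.Pairwise fun p q => Disjoint p.u q.u)
    (h3 : (⋃ p ∈ P, p.u) = C n₀ \ B)
    (h6 : ∀ n, ∃ G : Set X, IsClosed G ∧ Disjoint G B ∧
          ∀ p ∈ P, p.tgt = true → p.n = n → p.u ⊆ G)
    {c : ℝ} (hc0 : 0 ≤ c) (hc : ∀ b ∈ B, dist b (extEquiv φe b) ≤ c) :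
    ∃ F : X → X, Continuous F ∧
      (∀ p ∈ P, ∀ x (hx : x ∈ p.u), F x = ((p.e ⟨x, hx⟩ : ↥p.v) : X)) ∧
      (∀ x, x ∉ C n₀ \ B → F x = extEquiv φe x) ∧
      (∀ x, dist x (F x) ≤ c + 8 * (2:ℝ)⁻¹ ^ n₀) := by
  classical
  set φf := extEquiv φe with hφf
  set ψf := extEquiv φe.symm with hψf
  have huniq : ∀ p ∈ P, ∀ q ∈ P, ∀ x, x ∈ p.u → x ∈ q.u → p = q := by
    intro p hp q hq x hxp hxq
    by_contra hne
    exact (h2 hp hq hne).le_bot ⟨hxp, hxq⟩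
  set F : X → X := fun x =>
    if hx : ∃ p, p ∈ P ∧ x ∈ p.u then
      ((hx.choose.e ⟨x, hx.choose_spec.2⟩ : ↥hx.choose.v) : X)
    else φf x
    with hF
  have hFp : ∀ p ∈ P, ∀ x (hx : x ∈ p.u), F x = ((p.e ⟨x, hx⟩ : ↥p.v) : X) := by
    intro p hp x hx
    have hex : ∃ q, q ∈ P ∧ x ∈ q.u := ⟨p, hp, hx⟩
    rw [hF]
    simp only [dif_pos hex]
    have := huniq _ hex.choose_spec.1 _ hp _ hex.choose_spec.2 hx
    subst this
    rfl
  have hFo : ∀ x, x ∉ C n₀ \ B → F x = φf x := by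
    intro x hx
    rw [hF]
    have : ¬ ∃ q, q ∈ P ∧ x ∈ q.u := by
      rintro ⟨q, hq, hxq⟩
      exact hx ((h1 q hq).2.2.2.2.1 hxq)
    simp only [dif_neg this]
  -- the radius function
  have hrad : ∀ n, (0:ℝ) < 4 * (2:ℝ)⁻¹ ^ n := by
    intro n; positivity
  have hradmono : ∀ m n, m ≤ n → 4 * (2:ℝ)⁻¹ ^ n ≤ 4 * (2:ℝ)⁻¹ ^ m := by
    intro m n h
    have := pow_le_pow_of_le_one (by norm_num : (0:ℝ) ≤ 2⁻¹) (by norm_num) h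
    linarith
  refine ⟨F, ?_, hFp, hFo, ?_⟩
  · -- continuity
    rw [continuous_iff_continuousAt]
    intro x
    by_cases hxB : x ∈ B
    · -- the hard case : at a point of B
      rw [Metric.continuousAt_iff]
      intro ε hε
      -- continuity of φe at x
      have hφcont : ContinuousAt (fun b : ↥B => ((φe b : ↥B) : X)) ⟨x, hxB⟩ :=
        (continuous_subtype_val.comp φe.continuous).continuousAt
      rw [Metric.continuousAt_iff] at hφcont
      obtain ⟨θ₁, hθ₁pos, hθ₁⟩ := hφcont (ε / 2) (by linarith)
      -- choose a large stage N
      obtain ⟨N', hN'⟩ := exists_pow_lt_of_lt_one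
        (show (0:ℝ) < (min θ₁ ε) / 16 by
          have := lt_min_iff.2 ⟨hθ₁pos, hε⟩; positivity)
        (by norm_num : (2:ℝ)⁻¹ < 1)
      set N := max N' n₀ with hN
      have hradN : 4 * (2:ℝ)⁻¹ ^ N < (min θ₁ ε) / 4 := by
        have h1 : (2:ℝ)⁻¹ ^ N ≤ (2:ℝ)⁻¹ ^ N' :=
          pow_le_pow_of_le_one (by norm_num) (by norm_num) (le_max_left _ _)
        have := lt_min_iff.2 ⟨hθ₁pos, hε⟩
        nlinarith [hN']
      have hradθ : 4 * (2:ℝ)⁻¹ ^ N < θ₁ / 4 := by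
        have := min_le_left θ₁ ε; linarith
      have hradε : 4 * (2:ℝ)⁻¹ ^ N < ε / 4 := by
        have := min_le_right θ₁ ε; linarith
      -- avoid the finitely many closed "allocation" sets of stages < N
      choose G hGc hGB hGsub using h6
      have hxO : x ∈ (⋃ n ∈ Finset.range N, G n)ᶜ := by
        simp only [mem_compl_iff, mem_iUnion, not_exists]
        intro n _
        intro hxG
        exact (hGB n).le_bot ⟨hxG, hxB⟩
      have hOop : IsOpen (⋃ n ∈ Finset.range N, G n)ᶜ := by
        exact (isClosed_biUnion_finset fun n _ => hGc n).isOpen_compl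
      obtain ⟨θ₂, hθ₂pos, hθ₂⟩ := Metric.isOpen_iff.1 hOop x hxO
      -- x is in the open set C N
      obtain ⟨θ₃, hθ₃pos, hθ₃⟩ := Metric.isOpen_iff.1 (hC N).2 x (hCB N hxB)
      refine ⟨min (min θ₂ θ₃) (min (θ₁ / 2) (ε / 4)), by positivity, ?_⟩
      intro y hy
      have hyθ₂ : dist y x < θ₂ := lt_of_lt_of_le hy (le_trans (min_le_left _ _) (min_le_left _ _))
      have hyθ₃ : dist y x < θ₃ := lt_of_lt_of_le hy (le_trans (min_le_left _ _) (min_le_right _ _))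
      have hyθ₁ : dist y x < θ₁ / 2 := lt_of_lt_of_le hy (le_trans (min_le_right _ _) (min_le_left _ _))
      have hyε : dist y x < ε / 4 := lt_of_lt_of_le hy (le_trans (min_le_right _ _) (min_le_right _ _))
      have hFx : F x = φf x := hFo x (fun h => h.2 hxB)
      by_cases hyB : y ∈ B
      · -- y in B
        have hFy : F y = φf y := hFo y (fun h => h.2 hyB)
        rw [hFx, hFy, hφf, extEquiv_of_mem φe hyB, extEquiv_of_mem φe hxB]
        have : dist (⟨y, hyB⟩ : ↥B) (⟨x, hxB⟩ : ↥B) < θ₁ := by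
          rw [Subtype.dist_eq]
          simp only []
          linarith
        have := hθ₁ this
        calc dist ((φe ⟨y, hyB⟩ : ↥B) : X) ((φe ⟨x, hxB⟩ : ↥B) : X)
            = dist (φe ⟨y, hyB⟩) (φe ⟨x, hxB⟩) := (Subtype.dist_eq _ _).symm
          _ < ε / 2 := this
          _ < ε := by linarith
      · -- y not in B; y is in C N so it lies in some piece
        have hyCN : y ∈ C N := hθ₃ (Metric.mem_ball.2 hyθ₃)
        have hyCn₀ : y ∈ C n₀ := hCd n₀ N (le_max_right _ _) hyCN
        have : y ∈ ⋃ p ∈ P, p.u := h3 ▸ ⟨hyCn₀, hyB⟩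
        rcases mem_iUnion₂.1 this with ⟨p, hp, hyp⟩
        obtain ⟨pc1, pc2, pc3, pα, pu, pv, hsrc, htgt⟩ := h1 p hp
        -- the piece has a late stage
        have hpN : N ≤ p.n := by
          by_contra hlt
          push_neg at hlt
          cases hpt : p.tgt
          · -- source type : depth bound
            obtain ⟨hd, _, _⟩ := hsrc hpt
            have : y ∈ C (p.n + 1) := hCd (p.n + 1) N hlt hyCN
            exact absurd (mem_inter hyp this) (by rw [hd]; exact notMem_empty y)
          · -- target type : allocation avoidance
            have := hGsub p.n p hp hpt rfl hyp
            have hyO : y ∈ ⋃ n ∈ Finset.range N, G n := by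
              refine mem_biUnion ?_ this
              exact Finset.mem_range.2 hlt
            exact (hθ₂ (Metric.mem_ball.2 hyθ₂)) hyO
        have hradp : 4 * (2:ℝ)⁻¹ ^ p.n ≤ 4 * (2:ℝ)⁻¹ ^ N := hradmono _ _ hpN
        have hFyp : F y ∈ p.v := by
          rw [hFp p hp y hyp]
          exact ((p.e ⟨y, hyp⟩ : ↥p.v)).2
        rw [hFx, hφf, extEquiv_of_mem φe hxB]
        cases hpt : p.tgt
        · obtain ⟨_, hu, hv⟩ := hsrc hpt
          -- dist p.α x is small
          have hdy : dist y p.α < 4 * (2:ℝ)⁻¹ ^ p.n := Metric.mem_ball.1 (hu hyp)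
          have hdαx : dist p.α x < θ₁ := by
            have ht' := dist_triangle p.α y x
            rw [dist_comm p.α y] at ht'
            have hr' : 4 * (2:ℝ)⁻¹ ^ p.n ≤ 4 * (2:ℝ)⁻¹ ^ N := hradmono _ _ hpN
            linarith
          have hφα : dist (φf p.α) ((φe ⟨x, hxB⟩ : ↥B) : X) < ε / 2 := by
            have : dist (⟨p.α, pα⟩ : ↥B) (⟨x, hxB⟩ : ↥B) < θ₁ := by
              rw [Subtype.dist_eq]; exact hdαx
            have := hθ₁ this
            rw [hφf, extEquiv_of_mem φe pα]
            calc dist ((φe ⟨p.α, pα⟩ : ↥B) : X) ((φe ⟨x, hxB⟩ : ↥B) : X)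
                = dist (φe ⟨p.α, pα⟩) (φe ⟨x, hxB⟩) := (Subtype.dist_eq _ _).symm
              _ < ε / 2 := this
          have hdFy : dist (F y) (φf p.α) < 4 * (2:ℝ)⁻¹ ^ p.n := by
            have := hv hFyp
            rw [Metric.mem_ball] at this
            exact this
          have := dist_triangle (F y) (φf p.α) ((φe ⟨x, hxB⟩ : ↥B) : X)
          linarith
        · obtain ⟨_, hvball, huball⟩ := htgt hpt
          have hdy : dist y (ψf p.α) < 4 * (2:ℝ)⁻¹ ^ p.n := Metric.mem_ball.1 (huball hyp)
          have hψα : ψf p.α ∈ B := extEquiv_mem φe.symm pα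
          have hdαx : dist (ψf p.α) x < θ₁ := by
            have ht' := dist_triangle (ψf p.α) y x
            rw [dist_comm (ψf p.α) y] at ht'
            have hr' : 4 * (2:ℝ)⁻¹ ^ p.n ≤ 4 * (2:ℝ)⁻¹ ^ N := hradmono _ _ hpN
            linarith
          have hφψ : φf (ψf p.α) = p.α := by
            show extEquiv φe (extEquiv φe.symm p.α) = p.α
            have h9 := extEquiv_symm_apply φe.symm pα
            rwa [Homeomorph.symm_symm] at h9
          have hφα : dist p.α ((φe ⟨x, hxB⟩ : ↥B) : X) < ε / 2 := by
            have h5 : dist (⟨ψf p.α, hψα⟩ : ↥B) (⟨x, hxB⟩ : ↥B) < θ₁ := by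
              rw [Subtype.dist_eq]; exact hdαx
            have h6' := hθ₁ h5
            have h7 : ((φe ⟨ψf p.α, hψα⟩ : ↥B) : X) = p.α := by
              have h8 := extEquiv_of_mem φe hψα
              rw [← h8]
              exact hφψ
            rw [← h7]
            calc dist ((φe ⟨ψf p.α, hψα⟩ : ↥B) : X) ((φe ⟨x, hxB⟩ : ↥B) : X)
                = dist (φe ⟨ψf p.α, hψα⟩) (φe ⟨x, hxB⟩) := (Subtype.dist_eq _ _).symm
              _ < ε / 2 := h6'
          have hdFy : dist (F y) p.α < 4 * (2:ℝ)⁻¹ ^ p.n :=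
            Metric.mem_ball.1 (hvball hFyp)
          have := dist_triangle (F y) p.α ((φe ⟨x, hxB⟩ : ↥B) : X)
          linarith
    · -- at a point not in B
      by_cases hxC : x ∈ C n₀
      · -- x in some piece
        have : x ∈ ⋃ p ∈ P, p.u := h3 ▸ ⟨hxC, hxB⟩
        rcases mem_iUnion₂.1 this with ⟨p, hp, hxp⟩
        have hcont : ContinuousOn F p.u := by
          rw [continuousOn_iff_continuous_restrict]
          have : p.u.domRestrict F = fun y : ↥p.u => ((p.e y : ↥p.v) : X) := by
            funext y
            exact hFp p hp y.1 y.2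
          rw [this]
          exact continuous_subtype_val.comp p.e.continuous
        exact hcont.continuousAt (((h1 p hp).1.2).mem_nhds hxp)
      · -- x outside C n₀
        have hcont : ContinuousOn F (C n₀)ᶜ := by
          rw [continuousOn_iff_continuous_restrict]
          have : (C n₀)ᶜ.domRestrict F = fun y : ↥(C n₀)ᶜ => (y : X) := by
            funext y
            have h1' : (y : X) ∉ C n₀ \ B := fun h => y.2 h.1
            have h2' : (y : X) ∉ B := fun h => y.2 (hCB n₀ h)
            rw [restrict_apply, hFo _ h1', hφf, extEquiv_of_not_mem φe h2']
          rw [this]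
          exact continuous_subtype_val
        exact hcont.continuousAt ((hC n₀).1.isOpen_compl.mem_nhds hxC)
  · -- distance bound
    intro x
    by_cases hxB : x ∈ B
    · rw [hFo x (fun h => h.2 hxB)]
      have := hc x hxB
      have := hrad n₀
      linarith
    by_cases hxC : x ∈ C n₀
    · have : x ∈ ⋃ p ∈ P, p.u := h3 ▸ ⟨hxC, hxB⟩
      rcases mem_iUnion₂.1 this with ⟨p, hp, hxp⟩
      obtain ⟨pc1, pc2, pc3, pα, pu, pv, hsrc, htgt⟩ := h1 p hp
      have hradp : 4 * (2:ℝ)⁻¹ ^ p.n ≤ 4 * (2:ℝ)⁻¹ ^ n₀ := hradmono _ _ pc3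
      have hFyp : F x ∈ p.v := by
        rw [hFp p hp x hxp]
        exact ((p.e ⟨x, hxp⟩ : ↥p.v)).2
      cases hpt : p.tgt
      · obtain ⟨_, hu, hv⟩ := hsrc hpt
        have h1' : dist x p.α < 4 * (2:ℝ)⁻¹ ^ p.n := Metric.mem_ball.1 (hu hxp)
        have h2' : dist p.α (φf p.α) ≤ c := hc p.α pα
        have h3' : dist (φf p.α) (F x) < 4 * (2:ℝ)⁻¹ ^ p.n := by
          have := Metric.mem_ball.1 (hv hFyp)
          rwa [dist_comm]
        have := dist_triangle4 x p.α (φf p.α) (F x)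
        linarith
      · obtain ⟨_, hvball, huball⟩ := htgt hpt
        have h1' : dist x (ψf p.α) < 4 * (2:ℝ)⁻¹ ^ p.n := Metric.mem_ball.1 (huball hxp)
        have hψα : ψf p.α ∈ B := extEquiv_mem φe.symm pα
        have h2' : dist (ψf p.α) (φf (ψf p.α)) ≤ c := hc _ hψα
        have hφψ : φf (ψf p.α) = p.α := by
          show extEquiv φe (extEquiv φe.symm p.α) = p.α
          have h9 := extEquiv_symm_apply φe.symm pα
          rwa [Homeomorph.symm_symm] at h9
        have h3' : dist p.α (F x) < 4 * (2:ℝ)⁻¹ ^ p.n := by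
          have := Metric.mem_ball.1 (hvball hFyp)
          rwa [dist_comm]
        rw [hφψ] at h2'
        have := dist_triangle4 x (ψf p.α) p.α (F x)
        linarith
    · rw [hFo x (fun h => hxC h.1), hφf, extEquiv_of_not_mem φe hxB]
      have := hrad n₀
      simp only [dist_self]
      linarith

lemma extEquiv_apply_symm {B : Set X} (φe : ↥B ≃ₜ ↥B) {x : X} (hx : x ∈ B) :
    extEquiv φe (extEquiv φe.symm x) = x := by
  have h := extEquiv_symm_apply φe.symm hx
  rwa [Homeomorph.symm_symm] at h

lemma Piece.flip_flip (p : Piece X) : p.flip.flip = p := by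
  simp [Piece.flip]
  rfl

lemma glue_fam {B : Set X} (hB : IsClosed B) {C : ℕ → Set X}
    (hC : ∀ n, IsClopen (C n)) (hCB : ∀ n, B ⊆ C n) (hCd : ∀ m n, m ≤ n → C n ⊆ C m)
    {n₀ : ℕ} (φe : ↥B ≃ₜ ↥B) {P : Set (Piece X)}
    (h1 : ∀ p ∈ P, PieceOK B C n₀ (extEquiv φe) (extEquiv φe.symm) p)
    (h2u : P.Pairwise fun p q => Disjoint p.u q.u)
    (h2v : P.Pairwise fun p q => Disjoint p.v q.v)
    (h3u : (⋃ p ∈ P, p.u) = C n₀ \ B)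
    (h3v : (⋃ p ∈ P, p.v) = C n₀ \ B)
    (h6v : ∀ n, ∃ G, IsClosed G ∧ Disjoint G B ∧
        ∀ p ∈ P, p.tgt = false → p.n = n → p.v ⊆ G)
    (h6u : ∀ n, ∃ G, IsClosed G ∧ Disjoint G B ∧
        ∀ p ∈ P, p.tgt = true → p.n = n → p.u ⊆ G)
    {c : ℝ} (hc0 : 0 ≤ c) (hc : ∀ b ∈ B, dist b (extEquiv φe b) ≤ c) :
    ∃ Φ : X ≃ₜ X, (∀ b (hb : b ∈ B), Φ b = (φe ⟨b, hb⟩ : X)) ∧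
      ∀ x, dist x (Φ x) ≤ c + 8 * (2:ℝ)⁻¹ ^ n₀ := by
  classical
  obtain ⟨F, hFc, hFp, hFo, hFd⟩ := forward_fun hB hC hCB hCd φe h1 h2u h3u h6u hc0 hc
  set Q : Set (Piece X) := Piece.flip '' P with hQ
  have hflip_inj : Function.Injective (Piece.flip (X := X)) := by
    intro p q h
    have := congrArg Piece.flip h
    rwa [Piece.flip_flip, Piece.flip_flip] at this
  have hq1 : ∀ q ∈ Q, PieceOK B C n₀ (extEquiv φe.symm) (extEquiv φe.symm.symm) q := by
    rintro q ⟨p, hp, rfl⟩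
    rw [Homeomorph.symm_symm]
    exact (h1 p hp).flip
  have hq2 : Q.Pairwise fun p q => Disjoint p.u q.u := by
    rintro q ⟨p, hp, rfl⟩ q' ⟨p', hp', rfl⟩ hne
    have hpp : p ≠ p' := fun h => hne (by rw [h])
    exact h2v hp hp' hpp
  have hq3 : (⋃ q ∈ Q, q.u) = C n₀ \ B := by
    rw [hQ, biUnion_image]
    exact h3v
  have hq6 : ∀ n, ∃ G, IsClosed G ∧ Disjoint G B ∧
      ∀ q ∈ Q, q.tgt = true → q.n = n → q.u ⊆ G := by
    intro n
    obtain ⟨G, hGc, hGB, hGs⟩ := h6v n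
    refine ⟨G, hGc, hGB, ?_⟩
    rintro q ⟨p, hp, rfl⟩ htq hnq
    have hpt : p.tgt = false := by simpa [Piece.flip] using htq
    exact hGs p hp hpt hnq
  have hc' : ∀ b ∈ B, dist b (extEquiv φe.symm b) ≤ c := by
    intro b hb
    have h := hc (extEquiv φe.symm b) (extEquiv_mem φe.symm hb)
    rw [extEquiv_apply_symm φe hb] at h
    rwa [dist_comm] at h
  obtain ⟨G, hGc, hGp, hGo, hGd⟩ := forward_fun hB hC hCB hCd φe.symm hq1 hq2 hq3 hq6 hc0 hc'
  -- G inverts F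
  have hGF : ∀ x, G (F x) = x := by
    intro x
    by_cases hxB : x ∈ B
    · have h1' : F x = extEquiv φe x := hFo x (fun h => h.2 hxB)
      have h2' : extEquiv φe x ∈ B := extEquiv_mem φe hxB
      have h3' : G (extEquiv φe x) = extEquiv φe.symm (extEquiv φe x) :=
        hGo _ (fun h => h.2 h2')
      rw [h1', h3', extEquiv_symm_apply φe hxB]
    by_cases hxC : x ∈ C n₀
    · have : x ∈ ⋃ p ∈ P, p.u := h3u ▸ ⟨hxC, hxB⟩
      rcases mem_iUnion₂.1 this with ⟨p, hp, hxp⟩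
      have hFx : F x = ((p.e ⟨x, hxp⟩ : ↥p.v) : X) := hFp p hp x hxp
      have hmem : F x ∈ (Piece.flip p).u := by
        rw [hFx]; exact (p.e ⟨x, hxp⟩).2
      have hstep := hGp (Piece.flip p) ⟨p, hp, rfl⟩ (F x) hmem
      rw [hstep]
      show ((p.e.symm ⟨F x, hmem⟩ : ↥p.u) : X) = x
      have h9 : (⟨F x, hmem⟩ : ↥p.v) = p.e ⟨x, hxp⟩ := Subtype.ext hFx
      rw [h9, Homeomorph.symm_apply_apply]
    · have h1' : F x = extEquiv φe x := hFo x (fun h => hxC h.1)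
      have h2' : extEquiv φe x = x := extEquiv_of_not_mem φe hxB
      have h3' : G x = extEquiv φe.symm x := hGo x (fun h => hxC h.1)
      rw [h1', h2', h3', extEquiv_of_not_mem φe.symm hxB]
  have hFG : ∀ x, F (G x) = x := by
    intro x
    by_cases hxB : x ∈ B
    · have h1' : G x = extEquiv φe.symm x := hGo x (fun h => h.2 hxB)
      have h2' : extEquiv φe.symm x ∈ B := extEquiv_mem φe.symm hxB
      have h3' : F (extEquiv φe.symm x) = extEquiv φe (extEquiv φe.symm x) :=
        hFo _ (fun h => h.2 h2')
      rw [h1', h3', extEquiv_apply_symm φe hxB]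
    by_cases hxC : x ∈ C n₀
    · have : x ∈ ⋃ q ∈ Q, q.u := hq3 ▸ ⟨hxC, hxB⟩
      rcases mem_iUnion₂.1 this with ⟨q, hq, hxq⟩
      obtain ⟨p, hp, rfl⟩ := hq
      have hGx : G x = (((Piece.flip p).e ⟨x, hxq⟩ : ↥(Piece.flip p).v) : X) :=
        hGp (Piece.flip p) ⟨p, hp, rfl⟩ x hxq
      have hmem : G x ∈ p.u := by
        rw [hGx]; exact ((Piece.flip p).e ⟨x, hxq⟩).2
      have hstep := hFp p hp (G x) hmem
      rw [hstep]
      show ((p.e ⟨G x, hmem⟩ : ↥p.v) : X) = x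
      have h9 : (⟨G x, hmem⟩ : ↥p.u) = p.e.symm ⟨x, hxq⟩ := Subtype.ext hGx
      rw [h9, Homeomorph.apply_symm_apply]
    · have h1' : G x = extEquiv φe.symm x := hGo x (fun h => hxC h.1)
      have h2' : extEquiv φe.symm x = x := extEquiv_of_not_mem φe.symm hxB
      have h3' : F x = extEquiv φe x := hFo x (fun h => hxC h.1)
      rw [h1', h2', h3', extEquiv_of_not_mem φe hxB]
  refine ⟨⟨⟨F, G, hGF, hFG⟩, hFc, hGc⟩, ?_, ?_⟩
  · intro b hb
    show F b = _
    rw [hFo b (fun h => h.2 hb), extEquiv_of_mem φe hb]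
  · intro x
    exact hFd x

lemma stage_lemma (hz : StronglyZeroDim X) (hh : HHomogeneous X)
    {B : Set X} (hB : IsClosed B) (hBne : B.Nonempty) (hBd : Dense Bᶜ)
    {C : ℕ → Set X} (hC : ∀ n, IsClopen (C n)) (hCB : ∀ n, B ⊆ C n)
    (hCd : ∀ m n, m ≤ n → C n ⊆ C m)
    (hCs : ∀ n, C n ⊆ {x | Metric.infDist x B < (2:ℝ)⁻¹ ^ n})
    {n₀ : ℕ} (φe : ↥B ≃ₜ ↥B) (n : ℕ) (hn : n₀ ≤ n) {Us Ut : Set X}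
    (hUsc : IsClopen Us) (hUtc : IsClopen Ut)
    (hUs : Us ⊆ C n₀ \ B) (hUt : Ut ⊆ C n₀ \ B) :
    ∃ Qa : Set (Piece X),
      (∀ p ∈ Qa, PieceOK B C n₀ (extEquiv φe) (extEquiv φe.symm) p ∧ p.n = n) ∧
      Qa.Pairwise (fun p q => Disjoint p.u q.u ∧ Disjoint p.v q.v) ∧
      IsClopen (⋃ p ∈ Qa, p.u) ∧ IsClopen (⋃ p ∈ Qa, p.v) ∧
      (∀ p ∈ Qa, Disjoint p.u Us ∧ Disjoint p.v Ut) ∧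
      ((C n \ C (n + 1)) \ Us ⊆ ⋃ p ∈ Qa, p.u) ∧
      ((C n \ C (n + 1)) \ Ut ⊆ ⋃ p ∈ Qa, p.v) ∧
      (∃ G, IsClosed G ∧ Disjoint G B ∧ ∀ p ∈ Qa, p.tgt = false → p.v ⊆ G) ∧
      (∃ G, IsClosed G ∧ Disjoint G B ∧ ∀ p ∈ Qa, p.tgt = true → p.u ⊆ G) := by
  classical
  set φf := extEquiv φe with hφf
  set ψf := extEquiv φe.symm with hψf
  have hrpos : (0:ℝ) < (2:ℝ)⁻¹ ^ n := by positivity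
  have hCO : IsClopen ((C n₀)ᶜ) := (hC n₀).compl
  have hRB : Disjoint (C n \ C (n + 1)) B := by
    refine disjoint_left.2 fun x hx hxB => hx.2 (hCB (n + 1) hxB)
  -- anchors for subsets of C n of radius 2⁻¹^n
  have anchor : ∀ s : Set X, s.Nonempty → (∃ x₀ ∈ C n, s ⊆ Metric.ball x₀ ((2:ℝ)⁻¹ ^ n)) →
      ∃ α ∈ B, s ⊆ Metric.ball α (2 * (2:ℝ)⁻¹ ^ n) := by
    rintro s hne ⟨x₀, hx₀, hball⟩
    have := hCs n hx₀
    rw [mem_setOf_eq, Metric.infDist_lt_iff hBne] at this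
    obtain ⟨α, hα, hdist⟩ := this
    refine ⟨α, hα, fun x hx => ?_⟩
    have h1 := Metric.mem_ball.1 (hball hx)
    rw [Metric.mem_ball]
    calc dist x α ≤ dist x x₀ + dist x₀ α := dist_triangle _ _ _
      _ < 2 * (2:ℝ)⁻¹ ^ n := by linarith
  -- Phase A : clear the source ring
  set E : Set X := (C n \ C (n + 1)) \ Us with hE
  have hEc : IsClopen E := ((hC n).diff (hC (n + 1))).diff hUsc
  obtain ⟨Pa, hPa, hPd, hPu, hPsub⟩ := clopen_partition hz hEc hrpos
  set w : ↥Pa → Set X := Subtype.val with hw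
  have hwc : ∀ i, IsClopen (w i) := fun i => (hPa i.1 i.2).1
  have hwne : ∀ i, (w i).Nonempty := fun i => (hPa i.1 i.2).2.1
  have hwE : ∀ i, w i ⊆ E := fun i => hPu ▸ subset_sUnion_of_mem i.2
  have hwd : Pairwise (Function.onFun Disjoint w) := by
    intro i j hij
    exact hPd i.2 j.2 (fun h => hij (Subtype.ext h))
  have hwsub : ∀ s : Set ↥Pa, IsClosed (⋃ i ∈ s, w i) := by
    intro s
    have : (⋃ i ∈ s, w i) = ⋃₀ (Subtype.val '' s) := by
      rw [sUnion_image]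
    rw [this]
    exact (hPsub _ (image_subset_iff.2 fun i _ => i.2)).1
  have hanch : ∀ i : ↥Pa, ∃ α ∈ B, w i ⊆ Metric.ball α (2 * (2:ℝ)⁻¹ ^ n) := by
    intro i
    refine anchor (w i) (hwne i) ?_
    obtain ⟨x₀, hx₀E, hball⟩ := (hPa i.1 i.2).2.2
    exact ⟨x₀, hx₀E.1.1, hball⟩
  choose α hαB hαball using hanch
  -- allocate targets for phase A
  have hOc : IsClopen (Ut ∪ (C n₀)ᶜ) := hUtc.union hCO
  have hOB : Disjoint (Ut ∪ (C n₀)ᶜ) B := by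
    refine disjoint_left.2 fun x hx hxB => ?_
    rcases hx with hx | hx
    · exact (hUt hx).2 hxB
    · exact hx (hCB n₀ hxB)
  obtain ⟨v, hvc, hvne, hvball, hvdisj, hvhom, hvpair, hvU⟩ :=
    allocation hz hh hB hBd hOc hOB hrpos w hwc hwne hwd hwsub
      (fun i => φf (α i)) (fun i => extEquiv_mem φe (hαB i))
  have hvCB : ∀ i, v i ⊆ C n₀ \ B := by
    intro i x hx
    have hd := hvdisj i
    constructor
    · by_contra hxC
      exact hd.le_bot ⟨hx, Or.inr (Or.inr hxC)⟩
    · intro hxB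
      exact hd.le_bot ⟨hx, Or.inl hxB⟩
  have hvUt : ∀ i, Disjoint (v i) Ut := fun i => disjoint_left.2 fun x hx hxU =>
    (hvdisj i).le_bot ⟨hx, Or.inr (Or.inl hxU)⟩
  set eA : ∀ i : ↥Pa, ↥(w i) ≃ₜ ↥(v i) := fun i => (hvhom i).some with heA
  set QA : Set (Piece X) :=
    Set.range (fun i : ↥Pa => Piece.mk (w i) (v i) n (α i) false (eA i)) with hQA
  -- Phase B : clear the target ring
  set E' : Set X := ((C n \ C (n + 1)) \ Ut) \ ⋃ i, v i with hE'
  have hE'c : IsClopen E' := (((hC n).diff (hC (n + 1))).diff hUtc).diff hvU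
  obtain ⟨Pb, hPb, hPd', hPu', hPsub'⟩ := clopen_partition hz hE'c hrpos
  set w' : ↥Pb → Set X := Subtype.val with hw'
  have hw'c : ∀ j, IsClopen (w' j) := fun j => (hPb j.1 j.2).1
  have hw'ne : ∀ j, (w' j).Nonempty := fun j => (hPb j.1 j.2).2.1
  have hw'E : ∀ j, w' j ⊆ E' := fun j => hPu' ▸ subset_sUnion_of_mem j.2
  have hw'd : Pairwise (Function.onFun Disjoint w') := by
    intro i j hij
    exact hPd' i.2 j.2 (fun h => hij (Subtype.ext h))
  have hw'sub : ∀ s : Set ↥Pb, IsClosed (⋃ j ∈ s, w' j) := by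
    intro s
    have : (⋃ j ∈ s, w' j) = ⋃₀ (Subtype.val '' s) := by rw [sUnion_image]
    rw [this]
    exact (hPsub' _ (image_subset_iff.2 fun j _ => j.2)).1
  have hanch' : ∀ j : ↥Pb, ∃ β ∈ B, w' j ⊆ Metric.ball β (2 * (2:ℝ)⁻¹ ^ n) := by
    intro j
    refine anchor (w' j) (hw'ne j) ?_
    obtain ⟨x₀, hx₀E, hball⟩ := (hPb j.1 j.2).2.2
    exact ⟨x₀, hx₀E.1.1.1, hball⟩
  choose β hβB hβball using hanch'
  -- allocate sources for phase B
  have hEclosed : IsClopen (Us ∪ E ∪ (C n₀)ᶜ) := (hUsc.union hEc).union hCO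
  have hO'B : Disjoint (Us ∪ E ∪ (C n₀)ᶜ) B := by
    refine disjoint_left.2 fun x hx hxB => ?_
    rcases hx with (hx | hx) | hx
    · exact (hUs hx).2 hxB
    · exact hx.1.2 (hCB (n + 1) hxB)
    · exact hx (hCB n₀ hxB)
  obtain ⟨u', hu'c, hu'ne, hu'ball, hu'disj, hu'hom, hu'pair, hu'U⟩ :=
    allocation hz hh hB hBd hEclosed hO'B hrpos w' hw'c hw'ne hw'd hw'sub
      (fun j => ψf (β j)) (fun j => extEquiv_mem φe.symm (hβB j))
  have hu'CB : ∀ j, u' j ⊆ C n₀ \ B := by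
    intro j x hx
    have hd := hu'disj j
    constructor
    · by_contra hxC
      exact hd.le_bot ⟨hx, Or.inr (Or.inr hxC)⟩
    · intro hxB
      exact hd.le_bot ⟨hx, Or.inl hxB⟩
  have hu'Us : ∀ j, Disjoint (u' j) Us := by
    intro j
    refine disjoint_left.2 fun x hx hxU => ?_
    exact (hu'disj j).le_bot ⟨hx, Or.inr (Or.inl (Or.inl hxU))⟩
  have hu'E : ∀ j, Disjoint (u' j) E := by
    intro j
    refine disjoint_left.2 fun x hx hxE => ?_
    exact (hu'disj j).le_bot ⟨hx, Or.inr (Or.inl (Or.inr hxE))⟩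
  set eB : ∀ j : ↥Pb, ↥(w' j) ≃ₜ ↥(u' j) := fun j => (hu'hom j).some with heB
  set QB : Set (Piece X) :=
    Set.range (fun j : ↥Pb => Piece.mk (u' j) (w' j) n (β j) true (eB j).symm) with hQB
  -- final assembly
  have hEsub : E ⊆ C n₀ \ B := by
    intro x hx
    exact ⟨hCd n₀ n hn hx.1.1, fun hxB => hx.1.2 (hCB (n + 1) hxB)⟩
  have hE'sub : E' ⊆ C n₀ \ B := by
    intro x hx
    exact ⟨hCd n₀ n hn hx.1.1.1, fun hxB => hx.1.1.2 (hCB (n + 1) hxB)⟩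
  have hballmono : ∀ (z : X) (s : Set X), s ⊆ Metric.ball z (2 * (2:ℝ)⁻¹ ^ n) →
      s ⊆ Metric.ball z (4 * (2:ℝ)⁻¹ ^ n) := by
    intro z s h x hx
    have := Metric.mem_ball.1 (h hx)
    rw [Metric.mem_ball]
    linarith
  have hball3 : ∀ (z : X) (s : Set X), s ⊆ Metric.ball z (3 * (2:ℝ)⁻¹ ^ n) →
      s ⊆ Metric.ball z (4 * (2:ℝ)⁻¹ ^ n) := by
    intro z s h x hx
    have := Metric.mem_ball.1 (h hx)
    rw [Metric.mem_ball]
    linarith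
  have hokA : ∀ i : ↥Pa, PieceOK B C n₀ φf ψf
      (Piece.mk (w i) (v i) n (α i) false (eA i)) := by
    intro i
    refine ⟨hwc i, hvc i, hn, hαB i, (hwE i).trans hEsub, hvCB i, ?_, ?_⟩
    · intro _
      refine ⟨?_, hballmono _ _ (hαball i), hball3 _ _ (hvball i)⟩
      rw [eq_empty_iff_forall_notMem]
      rintro x ⟨hxw, hxC⟩
      exact (hwE i hxw).1.2 hxC
    · intro h
      exact absurd h (by simp)
  have hokB : ∀ j : ↥Pb, PieceOK B C n₀ φf ψf
      (Piece.mk (u' j) (w' j) n (β j) true (eB j).symm) := by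
    intro j
    refine ⟨hu'c j, hw'c j, hn, hβB j, hu'CB j, (hw'E j).trans hE'sub, ?_, ?_⟩
    · intro h
      exact absurd h (by simp)
    · intro _
      refine ⟨?_, hballmono _ _ (hβball j), hball3 _ _ (hu'ball j)⟩
      rw [eq_empty_iff_forall_notMem]
      rintro x ⟨hxw, hxC⟩
      exact (hw'E j hxw).1.1.2 hxC
  refine ⟨QA ∪ QB, ?_, ?_, ?_, ?_, ?_, ?_, ?_, ?_, ?_⟩
  · rintro p (⟨i, rfl⟩ | ⟨j, rfl⟩)
    · exact ⟨hokA i, rfl⟩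
    · exact ⟨hokB j, rfl⟩
  · rintro p (⟨i, rfl⟩ | ⟨j, rfl⟩) q (⟨i', rfl⟩ | ⟨j', rfl⟩) hne
    · have hii : i ≠ i' := fun h => hne (by rw [h])
      exact ⟨hwd hii, hvpair hii⟩
    · constructor
      · exact ((hu'E j').mono_right (hwE i)).symm
      · refine disjoint_left.2 fun x hx hx' => ?_
        exact (hw'E j' hx').2 (mem_iUnion.2 ⟨i, hx⟩)
    · constructor
      · exact (hu'E j).mono_right (hwE i')
      · refine disjoint_left.2 fun x hx hx' => ?_
        exact (hw'E j hx).2 (mem_iUnion.2 ⟨i', hx'⟩)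
    · have hjj : j ≠ j' := fun h => hne (by rw [h])
      exact ⟨hu'pair hjj, hw'd hjj⟩
  · have huni : (⋃ p ∈ QA ∪ QB, p.u) = E ∪ ⋃ j, u' j := by
      apply subset_antisymm
      · intro x hx
        rcases mem_iUnion₂.1 hx with ⟨p, hp, hxp⟩
        rcases hp with ⟨i, rfl⟩ | ⟨j, rfl⟩
        · exact Or.inl (hwE i hxp)
        · exact Or.inr (mem_iUnion.2 ⟨j, hxp⟩)
      · rintro x (hx | hx)
        · rcases hPu ▸ hx with ⟨s, hs, hxs⟩
          exact mem_biUnion (Or.inl ⟨⟨s, hs⟩, rfl⟩) hxs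
        · rcases mem_iUnion.1 hx with ⟨j, hxj⟩
          exact mem_biUnion (Or.inr ⟨j, rfl⟩) hxj
    rw [huni]
    exact hEc.union hu'U
  · have hunv : (⋃ p ∈ QA ∪ QB, p.v) = (⋃ i, v i) ∪ E' := by
      apply subset_antisymm
      · intro x hx
        rcases mem_iUnion₂.1 hx with ⟨p, hp, hxp⟩
        rcases hp with ⟨i, rfl⟩ | ⟨j, rfl⟩
        · exact Or.inl (mem_iUnion.2 ⟨i, hxp⟩)
        · exact Or.inr (hw'E j hxp)
      · rintro x (hx | hx)
        · rcases mem_iUnion.1 hx with ⟨i, hxi⟩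
          exact mem_biUnion (Or.inl ⟨i, rfl⟩) hxi
        · rcases hPu' ▸ hx with ⟨s, hs, hxs⟩
          exact mem_biUnion (Or.inr ⟨⟨s, hs⟩, rfl⟩) hxs
    rw [hunv]
    exact hvU.union hE'c
  · rintro p (⟨i, rfl⟩ | ⟨j, rfl⟩)
    · constructor
      · exact disjoint_left.2 fun x hx hxU => (hwE i hx).2 hxU
      · exact hvUt i
    · constructor
      · exact hu'Us j
      · exact disjoint_left.2 fun x hx hxU => (hw'E j hx).1.2 hxU
  · intro x hx
    rcases hPu ▸ (show x ∈ E from hx) with ⟨s, hs, hxs⟩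
    exact mem_biUnion (Or.inl ⟨⟨s, hs⟩, rfl⟩) hxs
  · intro x hx
    by_cases hxv : x ∈ ⋃ i, v i
    · rcases mem_iUnion.1 hxv with ⟨i, hxi⟩
      exact mem_biUnion (Or.inl ⟨i, rfl⟩) hxi
    · have hxE' : x ∈ E' := ⟨hx, hxv⟩
      rcases hPu' ▸ hxE' with ⟨s, hs, hxs⟩
      exact mem_biUnion (Or.inr ⟨⟨s, hs⟩, rfl⟩) hxs
  · refine ⟨⋃ i, v i, hvU.1, ?_, ?_⟩
    · refine disjoint_left.2 fun x hx hxB => ?_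
      rcases mem_iUnion.1 hx with ⟨i, hxi⟩
      exact (hvdisj i).le_bot ⟨hxi, Or.inl hxB⟩
    · rintro p (⟨i, rfl⟩ | ⟨j, rfl⟩) hpt
      · exact fun x hx => mem_iUnion.2 ⟨i, hx⟩
      · exact absurd hpt (by simp)
  · refine ⟨⋃ j, u' j, hu'U.1, ?_, ?_⟩
    · refine disjoint_left.2 fun x hx hxB => ?_
      rcases mem_iUnion.1 hx with ⟨j, hxj⟩
      exact (hu'disj j).le_bot ⟨hxj, Or.inl hxB⟩
    · rintro p (⟨i, rfl⟩ | ⟨j, rfl⟩) hpt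
      · exact absurd hpt (by simp)
      · exact fun x hx => mem_iUnion.2 ⟨j, hx⟩

lemma build_family (hz : StronglyZeroDim X) (hh : HHomogeneous X)
    {B : Set X} (hB : IsClosed B) (hBne : B.Nonempty) (hBd : Dense Bᶜ)
    {C : ℕ → Set X} (hC : ∀ n, IsClopen (C n)) (hCB : ∀ n, B ⊆ C n)
    (hCd : ∀ m n, m ≤ n → C n ⊆ C m)
    (hCs : ∀ n, C n ⊆ {x | Metric.infDist x B < (2:ℝ)⁻¹ ^ n})
    (n₀ : ℕ) (φe : ↥B ≃ₜ ↥B) :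
    ∃ P : Set (Piece X),
      (∀ p ∈ P, PieceOK B C n₀ (extEquiv φe) (extEquiv φe.symm) p) ∧
      (P.Pairwise fun p q => Disjoint p.u q.u) ∧
      (P.Pairwise fun p q => Disjoint p.v q.v) ∧
      (⋃ p ∈ P, p.u) = C n₀ \ B ∧ (⋃ p ∈ P, p.v) = C n₀ \ B ∧
      (∀ n, ∃ G, IsClosed G ∧ Disjoint G B ∧
        ∀ p ∈ P, p.tgt = false → p.n = n → p.v ⊆ G) ∧
      (∀ n, ∃ G, IsClosed G ∧ Disjoint G B ∧
        ∀ p ∈ P, p.tgt = true → p.n = n → p.u ⊆ G) := by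
  classical
  set φf := extEquiv φe with hφf
  set ψf := extEquiv φe.symm with hψf
  set US : Set (Piece X) → Set X := fun P => ⋃ p ∈ P, p.u with hUS
  set VS : Set (Piece X) → Set X := fun P => ⋃ p ∈ P, p.v with hVS
  set Good : ℕ → Set (Piece X) → Prop := fun k P =>
    (∀ p ∈ P, PieceOK B C n₀ φf ψf p ∧ p.n < n₀ + k) ∧
    (P.Pairwise fun p q => Disjoint p.u q.u ∧ Disjoint p.v q.v) ∧
    IsClopen (US P) ∧ IsClopen (VS P) ∧
    US P ⊆ C n₀ \ B ∧ VS P ⊆ C n₀ \ B ∧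
    C n₀ \ C (n₀ + k) ⊆ US P ∧ C n₀ \ C (n₀ + k) ⊆ VS P ∧
    (∀ n, ∃ G, IsClosed G ∧ Disjoint G B ∧
      ∀ p ∈ P, p.tgt = false → p.n = n → p.v ⊆ G) ∧
    (∀ n, ∃ G, IsClosed G ∧ Disjoint G B ∧
      ∀ p ∈ P, p.tgt = true → p.n = n → p.u ⊆ G) with hGood
  have good0 : Good 0 (∅ : Set (Piece X)) := by
    have hUSe : US ∅ = ∅ := by simp [hUS]
    have hVSe : VS ∅ = ∅ := by simp [hVS]
    refine ⟨fun p hp => absurd hp (notMem_empty p), pairwise_empty _, ?_, ?_, ?_, ?_, ?_, ?_, ?_, ?_⟩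
    · rw [hUSe]; exact isClopen_empty
    · rw [hVSe]; exact isClopen_empty
    · rw [hUSe]; exact empty_subset _
    · rw [hVSe]; exact empty_subset _
    · rw [hUSe, Nat.add_zero, diff_self]
    · rw [hVSe, Nat.add_zero, diff_self]
    · exact fun n => ⟨∅, isClosed_empty, disjoint_bot_left,
        fun p hp => absurd hp (notMem_empty p)⟩
    · exact fun n => ⟨∅, isClosed_empty, disjoint_bot_left,
        fun p hp => absurd hp (notMem_empty p)⟩
  have hstep : ∀ k (P : Set (Piece X)), Good k P →
      ∃ Q, P ⊆ Q ∧ Good (k + 1) Q ∧ ∀ p ∈ Q, p ∉ P → p.n = n₀ + k := by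
    intro k P hP
    obtain ⟨hP1, hP2, hP3, hP4, hP5, hP6, hP7, hP8, hP9, hP10⟩ := hP
    obtain ⟨Qa, hQ1, hQ2, hQ3, hQ4, hQ5, hQ6, hQ7, hQ8, hQ9⟩ :=
      stage_lemma hz hh hB hBne hBd hC hCB hCd hCs φe (n₀ + k)
        (Nat.le_add_right n₀ k) hP3 hP4 hP5 hP6
    refine ⟨P ∪ Qa, subset_union_left, ?_, ?_⟩
    · have hUSQ : US (P ∪ Qa) = US P ∪ (⋃ p ∈ Qa, p.u) := by
        rw [hUS]; exact biUnion_union P Qa _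
      have hVSQ : VS (P ∪ Qa) = VS P ∪ (⋃ p ∈ Qa, p.v) := by
        rw [hVS]; exact biUnion_union P Qa _
      have hQu_sub : (⋃ p ∈ Qa, p.u) ⊆ C n₀ \ B := by
        refine iUnion₂_subset fun p hp => (hQ1 p hp).1.2.2.2.2.1
      have hQv_sub : (⋃ p ∈ Qa, p.v) ⊆ C n₀ \ B := by
        refine iUnion₂_subset fun p hp => (hQ1 p hp).1.2.2.2.2.2.1
      refine ⟨?_, ?_, ?_, ?_, ?_, ?_, ?_, ?_, ?_, ?_⟩
      · rintro p (hp | hp)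
        · refine ⟨(hP1 p hp).1, ?_⟩
          rw [Nat.add_succ]
          exact Nat.lt_succ_of_lt (hP1 p hp).2
        · refine ⟨(hQ1 p hp).1, ?_⟩
          rw [(hQ1 p hp).2, Nat.add_succ]
          exact Nat.lt_succ_self _
      · rintro p (hp | hp) q (hq | hq) hne
        · exact hP2 hp hq hne
        · have hsu : p.u ⊆ US P := subset_biUnion_of_mem (u := fun p : Piece X => p.u) hp
          have hsv : p.v ⊆ VS P := subset_biUnion_of_mem (u := fun p : Piece X => p.v) hp
          exact ⟨((hQ5 q hq).1.mono_right hsu).symm, ((hQ5 q hq).2.mono_right hsv).symm⟩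
        · have hsu : q.u ⊆ US P := subset_biUnion_of_mem (u := fun p : Piece X => p.u) hq
          have hsv : q.v ⊆ VS P := subset_biUnion_of_mem (u := fun p : Piece X => p.v) hq
          exact ⟨(hQ5 p hp).1.mono_right hsu, (hQ5 p hp).2.mono_right hsv⟩
        · exact hQ2 hp hq hne
      · rw [hUSQ]; exact hP3.union hQ3
      · rw [hVSQ]; exact hP4.union hQ4
      · rw [hUSQ]; exact union_subset hP5 hQu_sub
      · rw [hVSQ]; exact union_subset hP6 hQv_sub
      · rw [hUSQ]
        intro x hx
        by_cases hxk : x ∈ C (n₀ + k)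
        · by_cases hxU : x ∈ US P
          · exact Or.inl hxU
          · exact Or.inr (hQ6 ⟨⟨hxk, by
              rw [Nat.add_succ] at hx
              exact hx.2⟩, hxU⟩)
        · exact Or.inl (hP7 ⟨hx.1, hxk⟩)
      · rw [hVSQ]
        intro x hx
        by_cases hxk : x ∈ C (n₀ + k)
        · by_cases hxU : x ∈ VS P
          · exact Or.inl hxU
          · exact Or.inr (hQ7 ⟨⟨hxk, by
              rw [Nat.add_succ] at hx
              exact hx.2⟩, hxU⟩)
        · exact Or.inl (hP8 ⟨hx.1, hxk⟩)
      · intro n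
        obtain ⟨G1, hG1c, hG1B, hG1s⟩ := hP9 n
        obtain ⟨G2, hG2c, hG2B, hG2s⟩ := hQ8
        refine ⟨G1 ∪ G2, hG1c.union hG2c, disjoint_union_left.2 ⟨hG1B, hG2B⟩, ?_⟩
        rintro p (hp | hp) ht hn
        · exact (hG1s p hp ht hn).trans subset_union_left
        · exact (hG2s p hp ht).trans subset_union_right
      · intro n
        obtain ⟨G1, hG1c, hG1B, hG1s⟩ := hP10 n
        obtain ⟨G2, hG2c, hG2B, hG2s⟩ := hQ9
        refine ⟨G1 ∪ G2, hG1c.union hG2c, disjoint_union_left.2 ⟨hG1B, hG2B⟩, ?_⟩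
        rintro p (hp | hp) ht hn
        · exact (hG1s p hp ht hn).trans subset_union_left
        · exact (hG2s p hp ht).trans subset_union_right
    · rintro p (hp | hp) hnp
      · exact absurd hp hnp
      · exact (hQ1 p hp).2
  -- iterate
  let seq : ∀ k : ℕ, {P : Set (Piece X) // Good k P} := fun k =>
    Nat.rec ⟨∅, good0⟩
      (fun k p => ⟨(hstep k p.1 p.2).choose, (hstep k p.1 p.2).choose_spec.2.1⟩) k
  have hseq_mono1 : ∀ k, (seq k).1 ⊆ (seq (k + 1)).1 := fun k =>
    (hstep k (seq k).1 (seq k).2).choose_spec.1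
  have hseq_new : ∀ k, ∀ p ∈ (seq (k + 1)).1, p ∉ (seq k).1 → p.n = n₀ + k := fun k =>
    (hstep k (seq k).1 (seq k).2).choose_spec.2.2
  have hseq_mono : ∀ k l, k ≤ l → (seq k).1 ⊆ (seq l).1 := by
    intro k l hkl
    induction l with
    | zero => rw [Nat.le_zero.1 hkl]
    | succ m ih =>
      rcases Nat.lt_or_ge k (m + 1) with h | h
      · exact (ih (Nat.lt_succ_iff.1 h)).trans (hseq_mono1 m)
      · rw [Nat.le_antisymm hkl h]
  set Pinf : Set (Piece X) := ⋃ k, (seq k).1 with hPinf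
  have hmem : ∀ p ∈ Pinf, ∃ k, p ∈ (seq k).1 := fun p hp => mem_iUnion.1 hp
  have hstage : ∀ n, ∀ p ∈ Pinf, p.n = n → p ∈ (seq (n + 1)).1 := by
    intro n p hp hpn
    obtain ⟨k, hk⟩ := hmem p hp
    rcases Nat.le_total k (n + 1) with h | h
    · exact hseq_mono k (n + 1) h hk
    · -- descend
      clear hp
      induction k with
      | zero => exact hseq_mono 0 (n + 1) (Nat.zero_le _) hk
      | succ m ih =>
        by_cases hm : p ∈ (seq m).1
        · rcases Nat.le_total m (n + 1) with h' | h'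
          · exact hseq_mono m (n + 1) h' hm
          · exact ih hm h'
        · have := hseq_new m p hk hm
          rcases Nat.le_total (m + 1) (n + 1) with h' | h'
          · exact hseq_mono (m + 1) (n + 1) h' hk
          · exact hseq_mono (m + 1) (n + 1) (by omega) hk
  refine ⟨Pinf, ?_, ?_, ?_, ?_, ?_, ?_, ?_⟩
  · intro p hp
    obtain ⟨k, hk⟩ := hmem p hp
    exact ((seq k).2.1 p hk).1
  · intro p hp q hq hne
    obtain ⟨k, hk⟩ := hmem p hp
    obtain ⟨l, hl⟩ := hmem q hq
    have h1 := hseq_mono k (max k l) (le_max_left _ _) hk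
    have h2 := hseq_mono l (max k l) (le_max_right _ _) hl
    exact ((seq (max k l)).2.2.1 h1 h2 hne).1
  · intro p hp q hq hne
    obtain ⟨k, hk⟩ := hmem p hp
    obtain ⟨l, hl⟩ := hmem q hq
    have h1 := hseq_mono k (max k l) (le_max_left _ _) hk
    have h2 := hseq_mono l (max k l) (le_max_right _ _) hl
    exact ((seq (max k l)).2.2.1 h1 h2 hne).2
  · apply subset_antisymm
    · refine iUnion₂_subset fun p hp => ?_
      obtain ⟨k, hk⟩ := hmem p hp
      exact ((seq k).2.1 p hk).1.2.2.2.2.1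
    · intro x hx
      have hpos : 0 < Metric.infDist x B := (hB.notMem_iff_infDist_pos hBne).1 hx.2
      obtain ⟨m, hm⟩ := exists_pow_lt_of_lt_one hpos (by norm_num : (2:ℝ)⁻¹ < 1)
      have hxm : x ∉ C (n₀ + m) := by
        intro hxc
        have h1 := hCs (n₀ + m) hxc
        rw [mem_setOf_eq] at h1
        have h2 : (2:ℝ)⁻¹ ^ (n₀ + m) ≤ (2:ℝ)⁻¹ ^ m :=
          pow_le_pow_of_le_one (by norm_num) (by norm_num) (Nat.le_add_left m n₀)
        linarith
      have := (seq m).2.2.2.2.2.2.2.1 ⟨hx.1, hxm⟩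
      rw [hUS] at this
      rcases mem_iUnion₂.1 this with ⟨p, hp, hxp⟩
      exact mem_iUnion₂.2 ⟨p, mem_iUnion.2 ⟨m, hp⟩, hxp⟩
  · apply subset_antisymm
    · refine iUnion₂_subset fun p hp => ?_
      obtain ⟨k, hk⟩ := hmem p hp
      exact ((seq k).2.1 p hk).1.2.2.2.2.2.1
    · intro x hx
      have hpos : 0 < Metric.infDist x B := (hB.notMem_iff_infDist_pos hBne).1 hx.2
      obtain ⟨m, hm⟩ := exists_pow_lt_of_lt_one hpos (by norm_num : (2:ℝ)⁻¹ < 1)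
      have hxm : x ∉ C (n₀ + m) := by
        intro hxc
        have h1 := hCs (n₀ + m) hxc
        rw [mem_setOf_eq] at h1
        have h2 : (2:ℝ)⁻¹ ^ (n₀ + m) ≤ (2:ℝ)⁻¹ ^ m :=
          pow_le_pow_of_le_one (by norm_num) (by norm_num) (Nat.le_add_left m n₀)
        linarith
      have := (seq m).2.2.2.2.2.2.2.2.1 ⟨hx.1, hxm⟩
      rw [hVS] at this
      rcases mem_iUnion₂.1 this with ⟨p, hp, hxp⟩
      exact mem_iUnion₂.2 ⟨p, mem_iUnion.2 ⟨m, hp⟩, hxp⟩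
  · intro n
    obtain ⟨G, hGc, hGB, hGs⟩ := (seq (n + 1)).2.2.2.2.2.2.2.2.2.1 n
    exact ⟨G, hGc, hGB, fun p hp ht hn' => hGs p (hstage n p hp hn') ht hn'⟩
  · intro n
    obtain ⟨G, hGc, hGB, hGs⟩ := (seq (n + 1)).2.2.2.2.2.2.2.2.2.2 n
    exact ⟨G, hGc, hGB, fun p hp ht hn' => hGs p (hstage n p hp hn') ht hn'⟩

lemma main_ext (hz : StronglyZeroDim X) (hh : HHomogeneous X)
    {B : Set X} (hB : IsClosed B) (hBnd : IsNowhereDense B)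
    (φe : ↥B ≃ₜ ↥B) {c δ : ℝ} (hc0 : 0 ≤ c)
    (hc : ∀ b ∈ B, dist b (extEquiv φe b) ≤ c) (hδ : 0 < δ) :
    ∃ Φ : X ≃ₜ X, (∀ b (hb : b ∈ B), Φ b = (φe ⟨b, hb⟩ : X)) ∧
      ∀ x, dist x (Φ x) ≤ c + δ := by
  rcases eq_empty_or_nonempty B with hBe | hBne
  · refine ⟨Homeomorph.refl X, ?_, ?_⟩
    · intro b hb
      exact absurd (hBe ▸ hb) (notMem_empty b)
    · intro x
      simp only [Homeomorph.refl_apply, id_eq, dist_self]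
      linarith
  · have hBd : Dense Bᶜ := by
      rw [← interior_eq_empty_iff_dense_compl]
      have h : interior (closure B) = ∅ := hBnd
      rwa [hB.closure_eq] at h
    obtain ⟨n₀, hn₀⟩ := exists_pow_lt_of_lt_one
      (show (0:ℝ) < δ / 8 by linarith) (by norm_num : (2:ℝ)⁻¹ < 1)
    obtain ⟨C, hC, hCB, hCd', hCs⟩ := exists_C_system hz hB
    have hCd : ∀ m n, m ≤ n → C n ⊆ C m := fun m n h =>
      antitone_nat_of_succ_le (fun k => hCd' k) h
    obtain ⟨P, f1, f2u, f2v, f3u, f3v, f6v, f6u⟩ :=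
      build_family hz hh hB hBne hBd hC hCB hCd hCs n₀ φe
    obtain ⟨Φ, hΦb, hΦd⟩ := glue_fam hB hC hCB hCd φe f1 f2u f2v f3u f3v f6v f6u hc0 hc
    refine ⟨Φ, hΦb, fun x => (hΦd x).trans ?_⟩
    have : 8 * (2:ℝ)⁻¹ ^ n₀ ≤ δ := by linarith
    linarith

theorem stmt_2' {X₁ : Type*} {X₂ : Type*} [MetricSpace X₁] [MetricSpace X₂]
    (hz₂ : StronglyZeroDim X₂) (hh₂ : HHomogeneous X₂)
    (A₁ : Set X₁) (A₂ : Set X₂)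
    (hA₂ : IsClosed A₂) (hA₂' : IsNowhereDense A₂)
    (g : X₁ ≃ₜ X₂) (hg : g '' A₁ = A₂)
    (f₀ : ↥A₁ ≃ₜ ↥A₂) (ε : ℝ) (hε : 0 < ε)
    (hclose : ∃ c < ε, ∀ a : ↥A₁, dist (g (a : X₁)) ((f₀ a : X₂)) ≤ c) :
    ∃ f : X₁ ≃ₜ X₂, (∀ a : ↥A₁, f (a : X₁) = (f₀ a : X₂)) ∧
      ∃ c < ε, ∀ x : X₁, dist (g x) (f x) ≤ c := by
  classical
  obtain ⟨c, hcε, hcd⟩ := hclose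
  rcases eq_empty_or_nonempty A₁ with hA1e | hA1ne
  · refine ⟨g, ?_, ε / 2, by linarith, ?_⟩
    · intro a
      exact absurd a.2 (Set.eq_empty_iff_forall_notMem.1 hA1e _)
    · intro x
      simp only [dist_self]
      linarith
  · set e : ↥A₁ ≃ₜ ↥A₂ := (g.image A₁).trans (Homeomorph.setCongr hg) with hedef
    have he : ∀ a : ↥A₁, ((e a : ↥A₂) : X₂) = g (a : X₁) := fun a => rfl
    set φe : ↥A₂ ≃ₜ ↥A₂ := e.symm.trans f₀ with hφedef
    have hφe : ∀ b : ↥A₂, (φe b : X₂) = (f₀ (e.symm b) : X₂) := fun b => rfl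
    set c' := max c 0 with hc'
    have hc'0 : 0 ≤ c' := le_max_right _ _
    have hc'ε : c' < ε := max_lt hcε hε
    have hcb : ∀ b ∈ A₂, dist b (extEquiv φe b) ≤ c' := by
      intro b hb
      rw [extEquiv_of_mem φe hb, hφe]
      have hb2 : (b : X₂) = g ((e.symm ⟨b, hb⟩ : ↥A₁) : X₁) := by
        have h := he (e.symm ⟨b, hb⟩)
        rw [Homeomorph.apply_symm_apply] at h
        exact h
      have h3 := hcd (e.symm ⟨b, hb⟩)
      rw [← hb2] at h3
      exact le_trans h3 (le_max_left _ _)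
    have hδ : (0:ℝ) < (ε - c') / 2 := by linarith
    obtain ⟨Φ, hΦb, hΦd⟩ := main_ext hz₂ hh₂ hA₂ hA₂' φe hc'0 hcb hδ
    refine ⟨g.trans Φ, ?_, c' + (ε - c') / 2, by linarith, ?_⟩
    · intro a
      have hga : g (a : X₁) ∈ A₂ := by
        rw [← hg]; exact mem_image_of_mem g a.2
      have h1 : Φ (g (a : X₁)) = (φe ⟨g (a : X₁), hga⟩ : X₂) := hΦb _ hga
      have h2 : (⟨g (a : X₁), hga⟩ : ↥A₂) = e a := Subtype.ext (he a).symm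
      show Φ (g (a : X₁)) = _
      rw [h1, h2, hφe, Homeomorph.symm_apply_apply]
    · intro x
      exact hΦd (g x)

end KRAux

/-- extending a homeomorphism of nowhere dense closed subsets of
h-homogeneous spaces, staying `ε`-close to a given global homeomorphism. -/
theorem stmt_2 {X₁ : Type u} {X₂ : Type v} [MetricSpace X₁] [MetricSpace X₂]
    (hz₁ : StronglyZeroDim X₁) (hz₂ : StronglyZeroDim X₂)
    (hh₁ : HHomogeneous X₁) (hh₂ : HHomogeneous X₂)
    (A₁ : Set X₁) (A₂ : Set X₂)
    (hA₁ : IsClosed A₁) (hA₁' : IsNowhereDense A₁)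
    (hA₂ : IsClosed A₂) (hA₂' : IsNowhereDense A₂)
    (g : X₁ ≃ₜ X₂) (hg : g '' A₁ = A₂)
    (f₀ : ↥A₁ ≃ₜ ↥A₂) (ε : ℝ) (hε : 0 < ε)
    (hclose : ∃ c < ε, ∀ a : ↥A₁, dist (g (a : X₁)) ((f₀ a : X₂)) ≤ c) :
    ∃ f : X₁ ≃ₜ X₂, (∀ a : ↥A₁, f (a : X₁) = (f₀ a : X₂)) ∧
      ∃ c < ε, ∀ x : X₁, dist (g x) (f x) ≤ c := by
  exact stmt_2' hz₂ hh₂ A₁ A₂ hA₂ hA₂' g hg f₀ ε hε hclose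
end
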